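/- arXiv:1107.3654 — 2 statements merged into one kernel-verified Lean document; each statement's English description precedes it below -/
import Mathlib

section
/- Let W be a finite Weyl group, W_P a parabolic subgroup, κ ∈ W^P, and w ∈ W with E(w,κ) ≠ ∅. Let s be a simple reflection with sw < w. Then: (1) if sκ > κ, then max E(w,κ) = max E(sw,κ); (2) if sκ ≤ κ, then max E(w,κ) = s * max E(sw,sκ), where * is the Demazure product. -/
/-!
Common framework for statements about the Bruhat order and the Demazure product on a
finite Weyl group, modelled as a finite (crystallographic) Coxeter system.
-/

noncomputable section

namespace DesingSMT

variable {B W : Type*} [Group W] {M : CoxeterMatrix B}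

/-- A Coxeter matrix is crystallographic; a finite group with a crystallographic
Coxeter system is a finite Weyl group. -/
def IsCrystallographic (M : CoxeterMatrix B) : Prop :=
  ∀ i j : B, i ≠ j → M i j ∈ ({2, 3, 4, 6} : Set ℕ)

/-- The Bruhat order on a Coxeter group, via the subword property: `u ≤ w` iff some
reduced word for `w` admits a subword whose product is `u`. -/
def cBruhatLE (cs : CoxeterSystem M W) (u w : W) : Prop :=
  ∃ ω : List B, cs.IsReduced ω ∧ cs.wordProd ω = w ∧
    ∃ ω' : List B, ω'.Sublist ω ∧ cs.wordProd ω' = u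

/-- The set `D(x,y) = {uv ∣ u ≤ x, v ≤ y}`. -/
def demazureSet (cs : CoxeterSystem M W) (x y : W) : Set W :=
  {z | ∃ u v : W, cBruhatLE cs u x ∧ cBruhatLE cs v y ∧ z = u * v}

/-- `d` is the Demazure product `x * y`, i.e. the (unique) Bruhat-greatest element of
the set `D(x,y)`. -/
def isDemazureProd (cs : CoxeterSystem M W) (x y d : W) : Prop :=
  d ∈ demazureSet cs x y ∧ ∀ z ∈ demazureSet cs x y, cBruhatLE cs z d

/-- The word product `w(𝐢(K)) = s_{i_{k_1}} ⋯ s_{i_{k_p}}` over the positions of `K`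
in increasing order. -/
def selProd (cs : CoxeterSystem M W) {r : ℕ} (ival : Fin r → B) (K : Finset (Fin r)) : W :=
  cs.wordProd ((K.sort (· ≤ ·)).map ival)

/-- `w = w_max(𝐢(J))`: `w` is the (unique) Bruhat-greatest element of
`{w(𝐢(K)) ∣ K ⊆ J}`. -/
def isWMaxOf (cs : CoxeterSystem M W) {r : ℕ} (ival : Fin r → B) (J : Finset (Fin r))
    (w : W) : Prop :=
  (∃ K ⊆ J, selProd cs ival K = w) ∧
    ∀ v : W, (∃ K ⊆ J, selProd cs ival K = v) → cBruhatLE cs v w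

/-- The (standard) parabolic subgroup `W_P` generated by the simple reflections
indexed by `I`. -/
def parab (cs : CoxeterSystem M W) (I : Set B) : Subgroup W :=
  Subgroup.closure (cs.simple '' I)

/-- `κ ∈ W^P`: `κ` is a minimal length representative of its coset `κ W_P`. -/
def isMinRep (cs : CoxeterSystem M W) (I : Set B) (κ : W) : Prop :=
  ∀ z ∈ parab cs I, cs.length κ ≤ cs.length (κ * z)

/-- The set `E(w,κ) = {v ∈ W ∣ v ≤ w, v ≡ κ mod W_P}`. -/
def cosetE (cs : CoxeterSystem M W) (I : Set B) (w κ : W) : Set W :=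
  {v | cBruhatLE cs v w ∧ v⁻¹ * κ ∈ parab cs I}

/-- `u = max E(w,κ)`: `u` is the (unique) Bruhat-greatest element of `E(w,κ)`. -/
def isMaxE (cs : CoxeterSystem M W) (I : Set B) (w κ u : W) : Prop :=
  u ∈ cosetE cs I w κ ∧ ∀ v ∈ cosetE cs I w κ, cBruhatLE cs v u


set_option linter.unusedSectionVars false
set_option maxHeartbeats 1000000

open List

variable {B W : Type*} [Group W] {M : CoxeterMatrix B}

/-- indicator function valued in `ZMod 2` -/
def ind (a b : W) : ZMod 2 := @ite _ (a = b) (Classical.dec _) 1 0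

lemma ind_congr {a b a' b' : W} (h : a = b ↔ a' = b') : ind a b = ind a' b' := by
  unfold ind
  by_cases hc : a = b
  · rw [if_pos hc, if_pos (h.mp hc)]
  · rw [if_neg hc, if_neg (fun hx => hc (h.mpr hx))]

lemma zmod2_add_self (x : ZMod 2) : x + x = 0 := by revert x; decide

/-- count mod 2 -/
def nu (t : W) (L : List W) : ZMod 2 := (L.map (fun x => ind t x)).sum

lemma nu_nil (t : W) : nu t ([] : List W) = 0 := rfl

lemma nu_cons (t x : W) (L : List W) : nu t (x :: L) = ind t x + nu t L := by
  simp [nu]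

lemma mem_of_nu_ne_zero {t : W} {L : List W} (h : nu t L ≠ 0) : t ∈ L := by
  induction L with
  | nil => simp [nu] at h
  | cons x L ih =>
    rw [nu_cons] at h
    by_cases hx : t = x
    · simp [hx]
    · right
      apply ih
      simpa [ind, hx] using h

variable (cs : CoxeterSystem M W)

/-- the permutation of `W × ZMod 2` associated to simple reflection `i` -/
def pe (i : B) : Equiv.Perm (W × ZMod 2) :=
  Function.Involutive.toPerm
    (fun p => (cs.simple i * p.1 * cs.simple i, p.2 + ind p.1 (cs.simple i)))
    (by
      intro p
      obtain ⟨t, ε⟩ := p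
      have h1 : cs.simple i * (cs.simple i * t * cs.simple i) * cs.simple i = t := by
        have := cs.simple_mul_simple_self i
        calc cs.simple i * (cs.simple i * t * cs.simple i) * cs.simple i
            = (cs.simple i * cs.simple i) * t * (cs.simple i * cs.simple i) := by
              group
          _ = t := by rw [this]; group
      have h2 : (cs.simple i * t * cs.simple i = cs.simple i) ↔ (t = cs.simple i) := by
        constructor
        · intro h
          have := congrArg (fun x => cs.simple i * x * cs.simple i) h
          try simp only at this
          rw [h1] at this
          rw [this]
          have hs := cs.simple_mul_simple_self i
          calc cs.simple i * cs.simple i * cs.simple i = 1 * cs.simple i := by rw [hs]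
            _ = cs.simple i := one_mul _
        · intro h
          rw [h]
          have hs := cs.simple_mul_simple_self i
          calc cs.simple i * cs.simple i * cs.simple i = 1 * cs.simple i := by rw [hs]
            _ = cs.simple i := one_mul _
      simp only
      rw [h1]
      congr 1
      rw [ind_congr h2, add_assoc]
      by_cases h : t = cs.simple i
      · simp [ind, h]
        decide
      · simp [ind, h])

lemma pe_apply (i : B) (t : W) (ε : ZMod 2) :
    pe cs i (t, ε) = (cs.simple i * t * cs.simple i, ε + ind t (cs.simple i)) := by
  rfl

/-- key commutation: `s_j * a = a⁻¹ * s_j` where `a = s_i s_j`. -/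
lemma sj_mul_a (i j : B) :
    cs.simple j * (cs.simple i * cs.simple j) = (cs.simple i * cs.simple j)⁻¹ * cs.simple j := by
  rw [mul_inv_rev, cs.inv_simple, cs.inv_simple]
  group

lemma pe_mul_pow_apply (i j : B) (k : ℕ) (t : W) (ε : ZMod 2) :
    ((pe cs i * pe cs j) ^ k) (t, ε) =
      ((cs.simple i * cs.simple j) ^ k * t * ((cs.simple i * cs.simple j) ^ k)⁻¹,
        ε + ∑ l ∈ Finset.range (2 * k),
          ind t (((cs.simple i * cs.simple j) ^ l)⁻¹ * cs.simple j)) := by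
  set a := cs.simple i * cs.simple j with ha
  induction k generalizing t ε with
  | zero => simp
  | succ k ih =>
    have hstep : (pe cs i * pe cs j) (t, ε) =
        (a * t * a⁻¹, ε + ind t ((a ^ 0)⁻¹ * cs.simple j) + ind t ((a ^ 1)⁻¹ * cs.simple j)) := by
      rw [Equiv.Perm.mul_apply, pe_apply, pe_apply]
      refine Prod.ext ?_ ?_
      · show cs.simple i * (cs.simple j * t * cs.simple j) * cs.simple i = a * t * a⁻¹
        rw [ha, mul_inv_rev, cs.inv_simple, cs.inv_simple]
        group
      · show ε + ind t (cs.simple j) + ind (cs.simple j * t * cs.simple j) (cs.simple i)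
            = ε + ind t ((a ^ 0)⁻¹ * cs.simple j) + ind t ((a ^ 1)⁻¹ * cs.simple j)
        congr 1
        · congr 1
          apply ind_congr
          simp
        · apply ind_congr
          rw [pow_one, ha, mul_inv_rev, cs.inv_simple, cs.inv_simple]
          have hs := cs.simple_mul_simple_self j
          have h2 : cs.simple j * (cs.simple j * t * cs.simple j) * cs.simple j = t := by
            calc cs.simple j * (cs.simple j * t * cs.simple j) * cs.simple j
                = (cs.simple j * cs.simple j) * t * (cs.simple j * cs.simple j) := by group
              _ = t := by rw [hs]; group
          constructor
          · intro h
            rw [← h]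
            exact h2.symm
          · intro h
            rw [h]
            calc cs.simple j * (cs.simple j * cs.simple i * cs.simple j) * cs.simple j
                = (cs.simple j * cs.simple j) * cs.simple i * (cs.simple j * cs.simple j) := by
                  group
              _ = cs.simple i := by rw [hs]; group
    rw [pow_succ, Equiv.Perm.mul_apply, hstep, ih]
    refine Prod.ext ?_ ?_
    · show a ^ k * (a * t * a⁻¹) * (a ^ k)⁻¹ = a ^ (k + 1) * t * (a ^ (k + 1))⁻¹
      rw [pow_succ']
      group
    · show ε + ind t ((a ^ 0)⁻¹ * cs.simple j) + ind t ((a ^ 1)⁻¹ * cs.simple j)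
          + ∑ l ∈ Finset.range (2 * k), ind (a * t * a⁻¹) ((a ^ l)⁻¹ * cs.simple j)
        = ε + ∑ l ∈ Finset.range (2 * (k + 1)), ind t ((a ^ l)⁻¹ * cs.simple j)
      have hshift : ∀ l : ℕ, ind (a * t * a⁻¹) ((a ^ l)⁻¹ * cs.simple j)
          = ind t ((a ^ (l + 2))⁻¹ * cs.simple j) := by
        intro l
        apply ind_congr
        constructor
        · intro h
          have : t = a⁻¹ * ((a ^ l)⁻¹ * cs.simple j) * a := by
            rw [← h]; group
          rw [this]
          have hc : cs.simple j * a = a⁻¹ * cs.simple j := sj_mul_a cs i j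
          calc a⁻¹ * ((a ^ l)⁻¹ * cs.simple j) * a
              = a⁻¹ * (a ^ l)⁻¹ * (cs.simple j * a) := by group
            _ = a⁻¹ * (a ^ l)⁻¹ * (a⁻¹ * cs.simple j) := by rw [hc]
            _ = (a ^ (l + 2))⁻¹ * cs.simple j := by
                rw [show l + 2 = l + 1 + 1 by ring, pow_succ, pow_succ]
                group
        · intro h
          rw [h]
          have hc : cs.simple j * a = a⁻¹ * cs.simple j := sj_mul_a cs i j
          have : (a ^ (l + 2))⁻¹ * cs.simple j = a⁻¹ * ((a ^ l)⁻¹ * cs.simple j) * a := by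
            calc (a ^ (l + 2))⁻¹ * cs.simple j
                = a⁻¹ * (a ^ l)⁻¹ * (a⁻¹ * cs.simple j) := by
                  rw [show l + 2 = l + 1 + 1 by ring, pow_succ, pow_succ]
                  group
              _ = a⁻¹ * (a ^ l)⁻¹ * (cs.simple j * a) := by rw [hc]
              _ = a⁻¹ * ((a ^ l)⁻¹ * cs.simple j) * a := by group
          rw [this]
          group
      rw [show 2 * (k + 1) = 2 * k + 1 + 1 by ring]
      rw [Finset.sum_range_succ' (fun l => ind t ((a ^ l)⁻¹ * cs.simple j)) (2 * k + 1)]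
      rw [Finset.sum_range_succ' (fun l => ind t ((a ^ (l + 1))⁻¹ * cs.simple j)) (2 * k)]
      simp only [hshift]
      abel

lemma pe_liftable : CoxeterMatrix.IsLiftable M (fun i => pe cs i) := by
  intro i j
  apply Equiv.ext
  rintro ⟨t, ε⟩
  rw [Equiv.Perm.one_apply, pe_mul_pow_apply]
  have hone : (cs.simple i * cs.simple j) ^ M i j = 1 := cs.simple_mul_simple_pow i j
  refine Prod.ext ?_ ?_
  · show (cs.simple i * cs.simple j) ^ M i j * t * ((cs.simple i * cs.simple j) ^ M i j)⁻¹ = t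
    rw [hone]; group
  · show ε + ∑ l ∈ Finset.range (2 * M i j),
        ind t (((cs.simple i * cs.simple j) ^ l)⁻¹ * cs.simple j) = ε
    rw [two_mul, Finset.sum_range_add]
    have : ∀ x : ℕ, ind t (((cs.simple i * cs.simple j) ^ (M i j + x))⁻¹ * cs.simple j)
        = ind t (((cs.simple i * cs.simple j) ^ x)⁻¹ * cs.simple j) := by
      intro x
      apply ind_congr
      rw [pow_add, hone, one_mul]
    simp only [this]
    rw [zmod2_add_self]
    exact add_zero ε

/-- the sign homomorphism `W →* Perm (W × ZMod 2)` -/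
def phi : W →* Equiv.Perm (W × ZMod 2) := cs.lift ⟨fun i => pe cs i, pe_liftable cs⟩

lemma phi_simple (i : B) : phi cs (cs.simple i) = pe cs i :=
  cs.lift_apply_simple (pe_liftable cs) i

lemma leftInvSeq_cons (i : B) (ω : List B) :
    cs.leftInvSeq (i :: ω) = cs.simple i :: (cs.leftInvSeq ω).map (MulAut.conj (cs.simple i)) :=
  rfl

lemma phi_wordProd (ω : List B) (t : W) (ε : ZMod 2) :
    phi cs (cs.wordProd ω)⁻¹ (t, ε) =
      ((cs.wordProd ω)⁻¹ * t * cs.wordProd ω, ε + nu t (cs.leftInvSeq ω)) := by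
  induction ω generalizing t ε with
  | nil => simp [nu]
  | cons i ω ih =>
    rw [cs.wordProd_cons, mul_inv_rev, map_mul, Equiv.Perm.mul_apply, cs.inv_simple,
      phi_simple, pe_apply, ih]
    have hnu : nu t (cs.leftInvSeq (i :: ω))
        = ind t (cs.simple i) + nu (cs.simple i * t * cs.simple i) (cs.leftInvSeq ω) := by
      rw [leftInvSeq_cons, nu_cons]
      congr 1
      unfold nu
      rw [List.map_map]
      congr 1
      apply List.map_congr_left
      intro x _
      apply ind_congr
      simp only [Function.comp_apply, MulAut.conj_apply, cs.inv_simple]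
      have hs := cs.simple_mul_simple_self i
      constructor
      · intro h
        rw [h]
        calc cs.simple i * (cs.simple i * x * cs.simple i) * cs.simple i
            = (cs.simple i * cs.simple i) * x * (cs.simple i * cs.simple i) := by group
          _ = x := by rw [hs]; group
      · intro h
        rw [← h]
        have h2 : cs.simple i * (cs.simple i * t * cs.simple i) * cs.simple i = t := by
          calc cs.simple i * (cs.simple i * t * cs.simple i) * cs.simple i
              = (cs.simple i * cs.simple i) * t * (cs.simple i * cs.simple i) := by group
            _ = t := by rw [hs]; group
        rw [h2]
    rw [hnu]
    refine Prod.ext ?_ ?_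
    · dsimp only
      group
    · dsimp only
      rw [add_assoc]

/-- The sign `η(w, t)`. -/
def eta (w t : W) : ZMod 2 := (phi cs w⁻¹ (t, 0)).2

lemma phi_inv_apply (w t : W) (ε : ZMod 2) :
    phi cs w⁻¹ (t, ε) = (w⁻¹ * t * w, ε + eta cs w t) := by
  obtain ⟨ω, hω⟩ := cs.wordProd_surjective w
  subst hω
  rw [phi_wordProd]
  have h0 := phi_wordProd cs ω t 0
  unfold eta
  rw [h0]
  simp

lemma eta_eq_nu (ω : List B) (t : W) : eta cs (cs.wordProd ω) t = nu t (cs.leftInvSeq ω) := by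
  unfold eta
  rw [phi_wordProd]
  simp

lemma eta_one (t : W) : eta cs 1 t = 0 := by
  have := eta_eq_nu cs [] t
  simpa [nu] using this

lemma eta_mul (x y t : W) : eta cs (x * y) t = eta cs x t + eta cs y (x⁻¹ * t * x) := by
  have h : phi cs (x * y)⁻¹ (t, 0) = ((x * y)⁻¹ * t * (x * y), eta cs (x * y) t) :=
    by rw [phi_inv_apply]; simp
  have h2 : phi cs (x * y)⁻¹ (t, 0) = phi cs y⁻¹ (phi cs x⁻¹ (t, 0)) := by
    rw [mul_inv_rev, map_mul, Equiv.Perm.mul_apply]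
  rw [phi_inv_apply, phi_inv_apply, phi_inv_apply] at h2
  have := congrArg Prod.snd h2
  simpa using this

lemma eta_inv (x t : W) : eta cs x⁻¹ (x⁻¹ * t * x) = eta cs x t := by
  have h := eta_mul cs x x⁻¹ t
  rw [mul_inv_cancel, eta_one] at h
  have : eta cs x t + eta cs x⁻¹ (x⁻¹ * t * x) = 0 := h.symm
  have h2 := congrArg (fun z => eta cs x t + z) this
  simp only [← add_assoc, zmod2_add_self, zero_add, add_zero] at h2
  exact h2

lemma eta_simple (i : B) (t : W) : eta cs (cs.simple i) t = ind t (cs.simple i) := by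
  have := eta_eq_nu cs [i] t
  rw [cs.wordProd_singleton] at this
  rw [this]
  show nu t (cs.leftInvSeq [i]) = ind t (cs.simple i)
  have : cs.leftInvSeq [i] = [cs.simple i] := by
    rw [leftInvSeq_cons]
    simp [CoxeterSystem.leftInvSeq]
  rw [this, nu_cons, nu_nil, add_zero]

lemma eta_reflection_self {t : W} (ht : cs.IsReflection t) : eta cs t t = 1 := by
  obtain ⟨v, i, rfl⟩ := ht
  set t := v * cs.simple i * v⁻¹ with hts
  have hv : v⁻¹ * t * v = cs.simple i := by rw [hts]; group
  have h1 : eta cs t t = eta cs v t + eta cs (cs.simple i * v⁻¹) (v⁻¹ * t * v) := by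
    have : t = v * (cs.simple i * v⁻¹) := by rw [hts]; group
    nth_rw 1 [this]
    exact eta_mul cs v (cs.simple i * v⁻¹) t
  rw [hv] at h1
  have h2 : eta cs (cs.simple i * v⁻¹) (cs.simple i)
      = eta cs (cs.simple i) (cs.simple i)
        + eta cs v⁻¹ ((cs.simple i)⁻¹ * cs.simple i * cs.simple i) := by
    exact eta_mul cs (cs.simple i) v⁻¹ (cs.simple i)
  have h3 : (cs.simple i)⁻¹ * cs.simple i * cs.simple i = cs.simple i := by group
  rw [h3] at h2
  have h4 : eta cs (cs.simple i) (cs.simple i) = 1 := by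
    rw [eta_simple]; simp [ind]
  have h5 : eta cs v⁻¹ (cs.simple i) = eta cs v t := by
    rw [← hv]
    exact eta_inv cs v t
  rw [h2, h4, h5] at h1
  rw [h1]
  have : eta cs v t + (1 + eta cs v t) = (eta cs v t + eta cs v t) + 1 := by abel
  rw [this, zmod2_add_self, zero_add]
lemma eta_eq_one_of_descent {w t : W} (ht : cs.IsReflection t)
    (h : cs.length (t * w) < cs.length w) : eta cs w t = 1 := by
  have hw : w = t * (t * w) := by rw [← mul_assoc, ht.mul_self, one_mul]
  have h1 : eta cs w t = eta cs t t + eta cs (t * w) (t⁻¹ * t * t) := by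
    nth_rw 1 [hw]
    exact eta_mul cs t (t * w) t
  have h2 : t⁻¹ * t * t = t := by group
  rw [h2, eta_reflection_self cs ht] at h1
  have h3 : eta cs (t * w) t = 0 := by
    by_contra hne
    obtain ⟨ω', hred', hprod'⟩ := cs.exists_reduced_word' (t * w)
    rw [hprod', eta_eq_nu] at hne
    have hmem : t ∈ cs.leftInvSeq ω' := mem_of_nu_ne_zero hne
    obtain ⟨j, hj, hget⟩ := List.mem_iff_getElem.mp hmem
    have hjlen : j < ω'.length := by
      rwa [cs.length_leftInvSeq] at hj
    have hgetD : (cs.leftInvSeq ω').getD j 1 = t := by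
      rw [List.getD_eq_getElem _ _ hj, hget]
    have hprod2 : cs.wordProd (ω'.eraseIdx j) = t * (t * w) := by
      rw [← cs.getD_leftInvSeq_mul_wordProd ω' j, hgetD, hprod']
    rw [← hw] at hprod2
    have h4 : cs.length w ≤ (ω'.eraseIdx j).length := by
      rw [← hprod2]; exact cs.length_wordProd_le _
    rw [List.length_eraseIdx, if_pos hjlen] at h4
    have h5 : ω'.length = cs.length (t * w) := by
      rw [hprod']; exact hred'.symm
    omega
  rw [h3, add_zero] at h1
  exact h1

lemma strong_exchange_left {w t : W} (ht : cs.IsReflection t)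
    (h : cs.length (t * w) < cs.length w) (ω : List B) (hω : cs.wordProd ω = w) :
    ∃ σ : List B, σ <+ ω ∧ σ.length + 1 = ω.length ∧ cs.wordProd σ = t * w := by
  have h1 : eta cs w t = 1 := eta_eq_one_of_descent cs ht h
  have h2 : nu t (cs.leftInvSeq ω) = 1 := by
    rw [← eta_eq_nu, hω, h1]
  have hmem : t ∈ cs.leftInvSeq ω := by
    apply mem_of_nu_ne_zero
    rw [h2]
    decide
  obtain ⟨j, hj, hget⟩ := List.mem_iff_getElem.mp hmem
  have hjlen : j < ω.length := by rwa [cs.length_leftInvSeq] at hj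
  have hgetD : (cs.leftInvSeq ω).getD j 1 = t := by
    rw [List.getD_eq_getElem _ _ hj, hget]
  refine ⟨ω.eraseIdx j, List.eraseIdx_sublist ω j, ?_, ?_⟩
  · rw [List.length_eraseIdx, if_pos hjlen]
    omega
  · rw [← cs.getD_leftInvSeq_mul_wordProd ω j, hgetD, hω]

lemma strong_exchange_right {w t : W} (ht : cs.IsReflection t)
    (h : cs.length (w * t) < cs.length w) (ω : List B) (hω : cs.wordProd ω = w) :
    ∃ σ : List B, σ <+ ω ∧ σ.length + 1 = ω.length ∧ cs.wordProd σ = w * t := by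
  have h1 : cs.length (t * w⁻¹) < cs.length w⁻¹ := by
    have : t * w⁻¹ = (w * t)⁻¹ := by rw [mul_inv_rev, ht.inv]
    rw [this, cs.length_inv, cs.length_inv]
    exact h
  have h2 : cs.wordProd ω.reverse = w⁻¹ := by rw [cs.wordProd_reverse, hω]
  obtain ⟨σ', hsub', hlen', hprod'⟩ := strong_exchange_left cs ht h1 ω.reverse h2
  refine ⟨σ'.reverse, ?_, ?_, ?_⟩
  · have := hsub'.reverse
    rwa [List.reverse_reverse] at this
  · rw [List.length_reverse] at *
    exact hlen'
  · rw [cs.wordProd_reverse, hprod', mul_inv_rev, inv_inv, ht.inv]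

lemma isReduced_append {ω₁ ω₂ : List B} (h : cs.IsReduced (ω₁ ++ ω₂)) :
    cs.IsReduced ω₁ ∧ cs.IsReduced ω₂ := by
  have h1 := cs.length_wordProd_le ω₁
  have h2 := cs.length_wordProd_le ω₂
  have h3 := cs.length_mul_le (cs.wordProd ω₁) (cs.wordProd ω₂)
  rw [← cs.wordProd_append] at h3
  unfold CoxeterSystem.IsReduced at h ⊢
  rw [List.length_append] at h
  constructor <;> omega

lemma isReduced_nil : cs.IsReduced ([] : List B) := by
  unfold CoxeterSystem.IsReduced
  simp

lemma exists_reduced_sublist : ∀ n (σ : List B), σ.length ≤ n →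
    ∃ ρ : List B, ρ <+ σ ∧ cs.IsReduced ρ ∧ cs.wordProd ρ = cs.wordProd σ := by
  intro n
  induction n using Nat.strong_induction_on with
  | _ n ih =>
    intro σ hσ
    by_cases hred : cs.IsReduced σ
    · exact ⟨σ, List.Sublist.refl σ, hred, rfl⟩
    · have hne : σ ≠ [] := by
        rintro rfl
        exact hred (isReduced_nil cs)
      have hlenpos : 0 < σ.length := List.length_pos_iff.mpr hne
      have hex : ∃ k, ¬ cs.IsReduced (σ.take (k + 1)) := by
        refine ⟨σ.length - 1, ?_⟩
        rw [show σ.length - 1 + 1 = σ.length by omega, List.take_length]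
        exact hred
      classical
      set k := Nat.find hex with hkdef
      have hk : ¬ cs.IsReduced (σ.take (k + 1)) := Nat.find_spec hex
      have hkmin : ∀ m, m < k → cs.IsReduced (σ.take (m + 1)) := fun m hm =>
        not_not.mp (Nat.find_min hex hm)
      have hklt : k < σ.length := by
        have hle : k ≤ σ.length - 1 := by
          apply Nat.find_min' hex
          rw [show σ.length - 1 + 1 = σ.length by omega, List.take_length]
          exact hred
        omega
      have hredk : cs.IsReduced (σ.take k) := by
        rcases Nat.eq_zero_or_pos k with h0 | hpos
        · rw [h0]
          simp [isReduced_nil cs]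
        · have := hkmin (k - 1) (by omega)
          rwa [show k - 1 + 1 = k by omega] at this
      set c := σ.get ⟨k, hklt⟩ with hc
      have htake : σ.take (k + 1) = σ.take k ++ [c] := by
        rw [List.take_succ]
        congr
        rw [List.getElem?_eq_getElem hklt]
        rfl
      have hlen_take : (σ.take k).length = k := by
        rw [List.length_take]
        omega
      have hlenk : cs.length (cs.wordProd (σ.take k)) = k := by
        have := hredk
        unfold CoxeterSystem.IsReduced at this
        rw [hlen_take] at this
        exact this
      have hlt : cs.length (cs.wordProd (σ.take k) * cs.simple c)
          < cs.length (cs.wordProd (σ.take k)) := by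
        rcases cs.length_mul_simple (cs.wordProd (σ.take k)) c with hp | hm
        · exfalso
          apply hk
          unfold CoxeterSystem.IsReduced
          rw [htake, cs.wordProd_append, cs.wordProd_singleton, List.length_append,
            hlen_take, hp, hlenk]
          simp
        · omega
      obtain ⟨A, hA, hAlen, hAprod⟩ :=
        strong_exchange_right cs (cs.isReflection_simple c) hlt (σ.take k) rfl
      have hsub : A ++ σ.drop (k + 1) <+ σ := by
        conv_rhs => rw [← List.take_append_drop (k + 1) σ]
        refine List.Sublist.append ?_ (List.Sublist.refl _)
        refine hA.trans ?_
        rw [htake]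
        exact List.sublist_append_left _ _
      have hprod : cs.wordProd (A ++ σ.drop (k + 1)) = cs.wordProd σ := by
        rw [cs.wordProd_append, hAprod]
        conv_rhs => rw [← List.take_append_drop (k + 1) σ]
        rw [cs.wordProd_append, htake, cs.wordProd_append, cs.wordProd_singleton]
      have hlen2 : (A ++ σ.drop (k + 1)).length < σ.length := by
        rw [List.length_append, List.length_drop, hlen_take] at *
        omega
      obtain ⟨ρ, h1, h2, h3⟩ := ih (n - 1) (by omega) (A ++ σ.drop (k + 1)) (by omega)
      exact ⟨ρ, h1.trans hsub, h2, by rw [h3, hprod]⟩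

/-! ### Bruhat order basics -/

lemma cle_intro {u w : W} (ω : List B) (hred : cs.IsReduced ω) (hw : cs.wordProd ω = w)
    (ω' : List B) (hsub : ω' <+ ω) (hu : cs.wordProd ω' = u) : cBruhatLE cs u w :=
  ⟨ω, hred, hw, ω', hsub, hu⟩

lemma cle_refl (w : W) : cBruhatLE cs w w := by
  obtain ⟨ω, hred, hw⟩ := cs.exists_reduced_word' w
  exact ⟨ω, hred, hw.symm, ω, List.Sublist.refl ω, hw.symm⟩

lemma cle_one (w : W) : cBruhatLE cs 1 w := by
  obtain ⟨ω, hred, hw⟩ := cs.exists_reduced_word' w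
  exact ⟨ω, hred, hw.symm, [], List.nil_sublist ω, by simp⟩

lemma cle_length {u w : W} (h : cBruhatLE cs u w) : cs.length u ≤ cs.length w := by
  obtain ⟨ω, hred, hw, ω', hsub, hu⟩ := h
  have h1 := cs.length_wordProd_le ω'
  have h2 := hsub.length_le
  unfold CoxeterSystem.IsReduced at hred
  rw [hw] at hred
  rw [hu] at h1
  omega

lemma cle_eq_of_length_ge {u w : W} (h : cBruhatLE cs u w)
    (hl : cs.length w ≤ cs.length u) : u = w := by
  obtain ⟨ω, hred, hw, ω', hsub, hu⟩ := h
  have h1 := cs.length_wordProd_le ω'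
  have h2 := hsub.length_le
  unfold CoxeterSystem.IsReduced at hred
  rw [hw] at hred
  rw [hu] at h1
  have : ω' = ω := hsub.eq_of_length (by omega)
  rw [← hu, this, hw]

lemma cle_antisymm {u w : W} (h1 : cBruhatLE cs u w) (h2 : cBruhatLE cs w u) : u = w :=
  cle_eq_of_length_ge cs h1 (cle_length cs h2)

lemma cle_witness_reduced {u w : W} (h : cBruhatLE cs u w) :
    ∃ ω ω' : List B, cs.IsReduced ω ∧ cs.wordProd ω = w ∧ ω' <+ ω ∧ cs.IsReduced ω' ∧
      cs.wordProd ω' = u := by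
  obtain ⟨ω, hred, hw, ω', hsub, hu⟩ := h
  obtain ⟨ρ, hρsub, hρred, hρprod⟩ := exists_reduced_sublist cs ω'.length ω' le_rfl
  exact ⟨ω, ρ, hred, hw, hρsub.trans hsub, hρred, by rw [hρprod, hu]⟩

lemma simple_mul_descent_length {w : W} {i : B} (h : cs.length (cs.simple i * w) < cs.length w) :
    cs.length w = cs.length (cs.simple i * w) + 1 := by
  rcases cs.length_simple_mul w i with h1 | h1 <;> omega

lemma simple_mul_ascent_length {w : W} {i : B} (h : cs.length w < cs.length (cs.simple i * w)) :
    cs.length (cs.simple i * w) = cs.length w + 1 := by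
  rcases cs.length_simple_mul w i with h1 | h1 <;> omega

lemma isReduced_cons_of_ascent {w : W} {i : B} (ω : List B) (hred : cs.IsReduced ω)
    (hw : cs.wordProd ω = w) (h : cs.length w < cs.length (cs.simple i * w)) :
    cs.IsReduced (i :: ω) ∧ cs.wordProd (i :: ω) = cs.simple i * w := by
  have h1 : cs.wordProd (i :: ω) = cs.simple i * w := by rw [cs.wordProd_cons, hw]
  refine ⟨?_, h1⟩
  have hl : cs.length w = ω.length := by rw [← hw]; exact hred
  unfold CoxeterSystem.IsReduced
  rw [h1, List.length_cons, simple_mul_ascent_length cs h, hl]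

lemma cle_mul_simple_left {u w : W} (i : B) (hw : cs.length w < cs.length (cs.simple i * w))
    (h : cBruhatLE cs u w) :
    cBruhatLE cs u (cs.simple i * w) ∧ cBruhatLE cs (cs.simple i * u) (cs.simple i * w) := by
  obtain ⟨ω, hred, hωw, ω', hsub, hu⟩ := h
  obtain ⟨hred2, hprod2⟩ := isReduced_cons_of_ascent cs ω hred hωw hw
  constructor
  · exact ⟨i :: ω, hred2, hprod2, ω', hsub.cons i, hu⟩
  · exact ⟨i :: ω, hred2, hprod2, i :: ω', hsub.cons₂ i, by rw [cs.wordProd_cons, hu]⟩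

lemma cle_simple_mul_self {w : W} (i : B) (h : cs.length (cs.simple i * w) < cs.length w) :
    cBruhatLE cs (cs.simple i * w) w := by
  obtain ⟨ω, hred, hw⟩ := cs.exists_reduced_word' (cs.simple i * w)
  have hasc : cs.length (cs.simple i * w) < cs.length (cs.simple i * (cs.simple i * w)) := by
    rw [cs.simple_mul_simple_cancel_left]
    exact h
  obtain ⟨hred2, hprod2⟩ := isReduced_cons_of_ascent cs ω hred hw.symm hasc
  rw [cs.simple_mul_simple_cancel_left] at hprod2
  exact ⟨i :: ω, hred2, hprod2, ω, (List.Sublist.refl ω).cons i, hw.symm⟩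

/-! ### The chain (Bruhat) order -/

def chainStep : W → W → Prop :=
  fun a b => ∃ t, cs.IsReflection t ∧ a = t * b ∧ cs.length a < cs.length b

def cleT : W → W → Prop := Relation.ReflTransGen (chainStep cs)

lemma cleT_subword {u w : W} (h : cleT cs u w) :
    ∀ ω : List B, cs.IsReduced ω → cs.wordProd ω = w →
      ∃ ω', ω' <+ ω ∧ cs.wordProd ω' = u := by
  induction h with
  | refl => exact fun ω _ hω => ⟨ω, List.Sublist.refl ω, hω⟩
  | tail hto hstep ih =>
    intro ω hred hω
    obtain ⟨t, ht, hveq, hlen⟩ := hstep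
    rw [hveq] at hlen
    obtain ⟨σ, hσsub, hσlen, hσprod⟩ := strong_exchange_left cs ht hlen ω hω
    obtain ⟨ρ, hρsub, hρred, hρprod⟩ := exists_reduced_sublist cs σ.length σ le_rfl
    obtain ⟨ω', hsub', hprod'⟩ := ih ρ hρred (by rw [hρprod, hσprod, ← hveq])
    exact ⟨ω', hsub'.trans (hρsub.trans hσsub), hprod'⟩

lemma grand : ∀ n : ℕ,
    (∀ (u w : W) (i : B), cleT cs u w → cs.length w < cs.length (cs.simple i * w) →
      cs.length u < cs.length (cs.simple i * u) → cs.length (cs.simple i * w) ≤ n →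
      cleT cs (cs.simple i * u) (cs.simple i * w)) ∧
    (∀ ζ : List B, cs.IsReduced ζ → ζ.length ≤ n → ∀ ζ' : List B, ζ' <+ ζ →
      cs.IsReduced ζ' → cleT cs (cs.wordProd ζ') (cs.wordProd ζ)) ∧
    (∀ (u v : W) (i : B), cs.length u < cs.length (cs.simple i * u) →
      cs.length (cs.simple i * v) < cs.length v → cleT cs u v → cs.length v ≤ n →
      cleT cs (cs.simple i * u) v) := by
  intro n
  induction n using Nat.strong_induction_on with
  | _ n ih =>
    have hS2 : ∀ (u w : W) (i : B), cleT cs u w → cs.length w < cs.length (cs.simple i * w) →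
        cs.length u < cs.length (cs.simple i * u) → cs.length (cs.simple i * w) ≤ n →
        cleT cs (cs.simple i * u) (cs.simple i * w) := by
      intro u w i hc hw hu hn
      rcases Relation.ReflTransGen.cases_tail hc with heq | ⟨v, huv, hstep⟩
      · rw [heq]
        exact Relation.ReflTransGen.refl
      · obtain ⟨t, ht, hveq, hlv⟩ := hstep
        have hw1 : cs.length (cs.simple i * w) = cs.length w + 1 :=
          simple_mul_ascent_length cs hw
        rcases cs.length_simple_mul v i with hasc | hdesc
        · -- ascent at v : recurse with S2 at smaller bound
          have hvasc : cs.length v < cs.length (cs.simple i * v) := by omega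
          have hrec := (ih (n - 1) (by omega)).1 u v i huv hvasc hu (by omega)
          refine hrec.tail ?_
          refine ⟨cs.simple i * t * (cs.simple i)⁻¹, ht.conj (cs.simple i), ?_, ?_⟩
          · rw [cs.inv_simple, hveq]
            simp only [mul_assoc, cs.simple_mul_simple_cancel_left]
          · omega
        · -- descent at v : use S3 at smaller bound
          have hvdesc : cs.length (cs.simple i * v) < cs.length v := by omega
          have hrec := (ih (n - 1) (by omega)).2.2 u v i hu hvdesc huv (by omega)
          have hstep1 : chainStep cs v w := ⟨t, ht, hveq, hlv⟩
          have hstep2 : chainStep cs w (cs.simple i * w) := by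
            refine ⟨cs.simple i, cs.isReflection_simple i, ?_, by omega⟩
            rw [cs.simple_mul_simple_cancel_left]
          exact (hrec.tail hstep1).tail hstep2
    have hS1 : ∀ ζ : List B, cs.IsReduced ζ → ζ.length ≤ n → ∀ ζ' : List B, ζ' <+ ζ →
        cs.IsReduced ζ' → cleT cs (cs.wordProd ζ') (cs.wordProd ζ) := by
      intro ζ hζred hζn
      cases ζ with
      | nil =>
        intro ζ' hsub _
        rw [List.sublist_nil.mp hsub]
        exact Relation.ReflTransGen.refl
      | cons i ζ₁ =>
        intro ζ' hsub hred'
        have hn1 : ζ₁.length + 1 ≤ n := by simpa using hζn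
        have hζ₁red : cs.IsReduced ζ₁ := (isReduced_append cs (ω₁ := [i]) hζred).2
        have hζlen : cs.length (cs.wordProd (i :: ζ₁)) = ζ₁.length + 1 := hζred
        have hζ₁len : cs.length (cs.wordProd ζ₁) = ζ₁.length := hζ₁red
        have hζeq : cs.wordProd (i :: ζ₁) = cs.simple i * cs.wordProd ζ₁ := cs.wordProd_cons i ζ₁
        have hζ₁asc : cs.length (cs.wordProd ζ₁) < cs.length (cs.simple i * cs.wordProd ζ₁) := by
          rw [← hζeq, hζlen, hζ₁len]
          omega
        cases hsub with
        | cons _ hsub' =>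
          have hrec := (ih (n - 1) (by omega)).2.1 ζ₁ hζ₁red (by omega) ζ' hsub' hred'
          refine hrec.tail ?_
          refine ⟨cs.simple i, cs.isReflection_simple i, ?_, ?_⟩
          · rw [hζeq, cs.simple_mul_simple_cancel_left]
          · rw [hζlen, hζ₁len]; omega
        | @cons_cons τ _ _ hsub' =>
          have hτred : cs.IsReduced τ := (isReduced_append cs (ω₁ := [i]) hred').2
          have hrec := (ih (n - 1) (by omega)).2.1 ζ₁ hζ₁red (by omega) τ hsub' hτred
          have hτasc : cs.length (cs.wordProd τ) < cs.length (cs.simple i * cs.wordProd τ) := by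
            have h1 : cs.length (cs.wordProd (i :: τ)) = τ.length + 1 := hred'
            have h2 : cs.length (cs.wordProd τ) = τ.length := hτred
            rw [cs.wordProd_cons] at h1
            omega
          have := hS2 (cs.wordProd τ) (cs.wordProd ζ₁) i hrec hζ₁asc hτasc (by
            rw [← hζeq, hζlen]
            omega)
          rw [← hζeq, ← cs.wordProd_cons] at this
          exact this
    have hS3 : ∀ (u v : W) (i : B), cs.length u < cs.length (cs.simple i * u) →
        cs.length (cs.simple i * v) < cs.length v → cleT cs u v → cs.length v ≤ n →
        cleT cs (cs.simple i * u) v := by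
      intro u v i hu hv hc hn
      obtain ⟨τ, hτred, hτ⟩ := cs.exists_reduced_word' (cs.simple i * v)
      have hωprod : cs.wordProd (i :: τ) = v := by
        rw [cs.wordProd_cons, ← hτ, cs.simple_mul_simple_cancel_left]
      have hωred : cs.IsReduced (i :: τ) := by
        unfold CoxeterSystem.IsReduced
        rw [hωprod, List.length_cons]
        have h1 : cs.length (cs.simple i * v) = τ.length := by rw [hτ]; exact hτred
        have h2 := simple_mul_descent_length cs hv
        omega
      obtain ⟨ω', hsub, hprod⟩ := cleT_subword cs hc (i :: τ) hωred hωprod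
      obtain ⟨ρ, hρsub, hρred, hρprod⟩ := exists_reduced_sublist cs ω'.length ω' le_rfl
      rw [hprod] at hρprod
      have hρsub2 : ρ <+ i :: τ := hρsub.trans hsub
      cases hρsub2 with
      | cons _ hsub' =>
        have hired : cs.IsReduced (i :: ρ) := by
          unfold CoxeterSystem.IsReduced
          rw [cs.wordProd_cons, hρprod, List.length_cons]
          have h1 : cs.length u = ρ.length := by rw [← hρprod]; exact hρred
          have h2 := simple_mul_ascent_length cs hu
          omega
        have := hS1 (i :: τ) hωred (by
          have h1 : cs.length v = τ.length + 1 := by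
            rw [← hωprod]; exact hωred
          simp only [List.length_cons]
          omega) (i :: ρ) (hsub'.cons₂ i) hired
        rw [hωprod, cs.wordProd_cons, hρprod] at this
        exact this
      | @cons_cons ρ₁ _ _ hsub' =>
        exfalso
        have h1 : cs.length u = ρ₁.length + 1 := by
          rw [← hρprod]
          exact hρred
        have h2 : cs.wordProd ρ₁ = cs.simple i * u := by
          rw [← hρprod, cs.wordProd_cons, cs.simple_mul_simple_cancel_left]
        have h3 : cs.length (cs.simple i * u) ≤ ρ₁.length := by
          rw [← h2]
          exact cs.length_wordProd_le ρ₁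
        omega
    exact ⟨hS2, hS1, hS3⟩

/-! ### Consequences: subword property, transitivity, lifting -/

lemma cle_to_cleT {u w : W} (h : cBruhatLE cs u w) : cleT cs u w := by
  obtain ⟨ω, ρ, hred, hw, hsub, hρred, hu⟩ := cle_witness_reduced cs h
  have hg := ((grand cs ω.length).2.1) ω hred le_rfl ρ hsub hρred
  rw [hu, hw] at hg
  exact hg

lemma cle_subword {u w : W} (h : cBruhatLE cs u w) (ω : List B) (hred : cs.IsReduced ω)
    (hw : cs.wordProd ω = w) : ∃ ω', ω' <+ ω ∧ cs.wordProd ω' = u :=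
  cleT_subword cs (cle_to_cleT cs h) ω hred hw

lemma cle_trans {u v w : W} (h1 : cBruhatLE cs u v) (h2 : cBruhatLE cs v w) :
    cBruhatLE cs u w := by
  obtain ⟨ω, ρ, hred, hw, hsub, hρred, hv⟩ := cle_witness_reduced cs h2
  obtain ⟨ω', hsub', hu⟩ := cle_subword cs h1 ρ hρred hv
  exact ⟨ω, hred, hw, ω', hsub'.trans hsub, hu⟩

lemma cle_F6 {u y : W} (i : B) (hu : cs.length (cs.simple i * u) < cs.length u)
    (h : cBruhatLE cs u y) : cBruhatLE cs (cs.simple i * u) y := by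
  obtain ⟨ω, ρ, hred, hw, hsub, hρred, hρu⟩ := cle_witness_reduced cs h
  obtain ⟨σ, hσsub, _, hσprod⟩ :=
    strong_exchange_left cs (cs.isReflection_simple i) hu ρ hρu
  exact ⟨ω, hred, hw, σ, hσsub.trans hsub, hσprod⟩

lemma cle_Z2 {u w : W} (i : B) (hw : cs.length (cs.simple i * w) < cs.length w)
    (hu : cs.length u < cs.length (cs.simple i * u)) (h : cBruhatLE cs u w) :
    cBruhatLE cs u (cs.simple i * w) := by
  obtain ⟨τ, hτred, hτ⟩ := cs.exists_reduced_word' (cs.simple i * w)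
  have hωprod : cs.wordProd (i :: τ) = w := by
    rw [cs.wordProd_cons, ← hτ, cs.simple_mul_simple_cancel_left]
  have hωred : cs.IsReduced (i :: τ) := by
    unfold CoxeterSystem.IsReduced
    rw [hωprod, List.length_cons]
    have h1 : cs.length (cs.simple i * w) = τ.length := by rw [hτ]; exact hτred
    have h2 := simple_mul_descent_length cs hw
    omega
  obtain ⟨ω', hsub, hprod⟩ := cle_subword cs h (i :: τ) hωred hωprod
  obtain ⟨ρ, hρsub, hρred, hρprod⟩ := exists_reduced_sublist cs ω'.length ω' le_rfl
  rw [hprod] at hρprod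
  have hρ2 : ρ <+ i :: τ := hρsub.trans hsub
  cases hρ2 with
  | cons _ hsub' => exact ⟨τ, hτred, hτ.symm, ρ, hsub', hρprod⟩
  | @cons_cons ρ₁ _ _ hsub' =>
    exfalso
    have h1 : cs.length u = ρ₁.length + 1 := by rw [← hρprod]; exact hρred
    have h2 : cs.wordProd ρ₁ = cs.simple i * u := by
      rw [← hρprod, cs.wordProd_cons, cs.simple_mul_simple_cancel_left]
    have h3 := cs.length_wordProd_le ρ₁
    rw [h2] at h3
    omega

lemma cle_Z1 {u w : W} (i : B) (hw : cs.length (cs.simple i * w) < cs.length w)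
    (hu : cs.length (cs.simple i * u) < cs.length u) (h : cBruhatLE cs u w) :
    cBruhatLE cs (cs.simple i * u) (cs.simple i * w) := by
  obtain ⟨τ, hτred, hτ⟩ := cs.exists_reduced_word' (cs.simple i * w)
  have hωprod : cs.wordProd (i :: τ) = w := by
    rw [cs.wordProd_cons, ← hτ, cs.simple_mul_simple_cancel_left]
  have hωred : cs.IsReduced (i :: τ) := by
    unfold CoxeterSystem.IsReduced
    rw [hωprod, List.length_cons]
    have h1 : cs.length (cs.simple i * w) = τ.length := by rw [hτ]; exact hτred
    have h2 := simple_mul_descent_length cs hw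
    omega
  obtain ⟨ω', hsub, hprod⟩ := cle_subword cs h (i :: τ) hωred hωprod
  obtain ⟨ρ, hρsub, hρred, hρprod⟩ := exists_reduced_sublist cs ω'.length ω' le_rfl
  rw [hprod] at hρprod
  have hρ2 : ρ <+ i :: τ := hρsub.trans hsub
  cases hρ2 with
  | cons _ hsub' =>
    exact cle_F6 cs i hu ⟨τ, hτred, hτ.symm, ρ, hsub', hρprod⟩
  | @cons_cons ρ₁ _ _ hsub' =>
    have h2 : cs.wordProd ρ₁ = cs.simple i * u := by
      rw [← hρprod, cs.wordProd_cons, cs.simple_mul_simple_cancel_left]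
    exact ⟨τ, hτred, hτ.symm, ρ₁, hsub', h2⟩

lemma cle_simple_cases {x : W} {i : B} (h : cBruhatLE cs x (cs.simple i)) :
    x = 1 ∨ x = cs.simple i := by
  obtain ⟨ω, hred, hw, ω', hsub, hx⟩ := h
  have hlen : ω.length = 1 := by
    have h1 : cs.length (cs.simple i) = 1 := cs.length_simple i
    unfold CoxeterSystem.IsReduced at hred
    rw [hw, h1] at hred
    omega
  obtain ⟨c, rfl⟩ := List.length_eq_one_iff.mp hlen
  cases hsub with
  | cons _ h' =>
    left
    rw [← hx, List.sublist_nil.mp h', cs.wordProd_nil]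
  | cons_cons _ h' =>
    right
    rename_i τ
    rw [List.sublist_nil.mp h'] at hx
    rw [← hx, ← hw]

/-! ### Demazure product helper lemmas -/

lemma demazure_simple_max_asc {i : B} {u' d u : W}
    (hasc : cs.length u' < cs.length (cs.simple i * u'))
    (hd : isDemazureProd cs (cs.simple i) u' d)
    (hsu'u : cBruhatLE cs (cs.simple i * u') u)
    (huD : u ∈ demazureSet cs (cs.simple i) u') :
    u = d := by
  obtain ⟨hdD, hdmax⟩ := hd
  have hub : ∀ zz ∈ demazureSet cs (cs.simple i) u', cBruhatLE cs zz u := by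
    rintro zz ⟨x, y, hx, hy, rfl⟩
    have hu'su' := (cle_mul_simple_left cs i hasc (cle_refl cs u')).1
    rcases cle_simple_cases cs hx with rfl | rfl
    · rw [one_mul]
      exact cle_trans cs (cle_trans cs hy hu'su') hsu'u
    · exact cle_trans cs ((cle_mul_simple_left cs i hasc hy).2) hsu'u
  exact cle_antisymm cs (hdmax u huD) (hub d hdD)

lemma demazure_simple_max_desc {i : B} {u' d : W}
    (hdesc : cs.length (cs.simple i * u') < cs.length u')
    (hd : isDemazureProd cs (cs.simple i) u' d) : d = u' := by
  obtain ⟨hdD, hdmax⟩ := hd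
  have hasc2 : cs.length (cs.simple i * u')
      < cs.length (cs.simple i * (cs.simple i * u')) := by
    rw [cs.simple_mul_simple_cancel_left]
    exact hdesc
  have hub : ∀ zz ∈ demazureSet cs (cs.simple i) u', cBruhatLE cs zz u' := by
    rintro zz ⟨x, y, hx, hy, rfl⟩
    rcases cle_simple_cases cs hx with rfl | rfl
    · rw [one_mul]; exact hy
    · rcases Nat.lt_or_ge (cs.length (cs.simple i * y)) (cs.length y) with hyd | hya
      · exact cle_F6 cs i hyd hy
      · have hya' : cs.length y < cs.length (cs.simple i * y) :=
          lt_of_le_of_ne hya (cs.length_simple_mul_ne y i).symm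
        have hy2 := cle_Z2 cs i hdesc hya' hy
        have h3 := (cle_mul_simple_left cs i hasc2 hy2).2
        rwa [cs.simple_mul_simple_cancel_left] at h3
  have h1 : u' ∈ demazureSet cs (cs.simple i) u' :=
    ⟨1, u', cle_one cs _, cle_refl cs u', (one_mul u').symm⟩
  exact cle_antisymm cs (hub d hdD) (hdmax u' h1)

/-! ### Parabolic subgroups and minimal coset representatives -/

lemma parab_word_mem {I : Set B} {ω : List B} (h : ∀ c ∈ ω, c ∈ I) :
    cs.wordProd ω ∈ parab cs I := by
  induction ω with
  | nil => rw [cs.wordProd_nil]; exact one_mem _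
  | cons c ω ih =>
    rw [cs.wordProd_cons]
    refine mul_mem (Subgroup.subset_closure ⟨c, h c (List.mem_cons_self), rfl⟩) ?_
    exact ih fun c' hc' => h c' (List.mem_cons_of_mem _ hc')

lemma simple_mem_parab {I : Set B} {c : B} (hc : c ∈ I) : cs.simple c ∈ parab cs I :=
  Subgroup.subset_closure ⟨c, hc, rfl⟩

lemma mem_parab_iff {I : Set B} {z : W} :
    z ∈ parab cs I ↔ ∃ ω : List B, (∀ c ∈ ω, c ∈ I) ∧ cs.wordProd ω = z := by
  constructor
  · intro h
    induction h using Subgroup.closure_induction with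
    | mem x hx =>
      obtain ⟨c, hc, rfl⟩ := hx
      exact ⟨[c], by simpa using hc, cs.wordProd_singleton c⟩
    | one => exact ⟨[], by simp, cs.wordProd_nil⟩
    | mul x y hx hy ihx ihy =>
      obtain ⟨ω₁, h1, e1⟩ := ihx
      obtain ⟨ω₂, h2, e2⟩ := ihy
      refine ⟨ω₁ ++ ω₂, ?_, by rw [cs.wordProd_append, e1, e2]⟩
      intro c hc
      rcases List.mem_append.mp hc with h | h
      exacts [h1 c h, h2 c h]
    | inv x hx ihx =>
      obtain ⟨ω₁, h1, e1⟩ := ihx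
      exact ⟨ω₁.reverse, fun c hc => h1 c (List.mem_reverse.mp hc),
        by rw [cs.wordProd_reverse, e1]⟩
  · rintro ⟨ω, h, rfl⟩
    exact parab_word_mem cs h

lemma mem_parab_reduced {I : Set B} {z : W} (h : z ∈ parab cs I) :
    ∃ ω : List B, cs.IsReduced ω ∧ (∀ c ∈ ω, c ∈ I) ∧ cs.wordProd ω = z := by
  obtain ⟨ω, hI, hω⟩ := (mem_parab_iff cs).mp h
  obtain ⟨ρ, hsub, hred, hprod⟩ := exists_reduced_sublist cs ω.length ω le_rfl
  exact ⟨ρ, hred, fun c hc => hI c (hsub.subset hc), by rw [hprod, hω]⟩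

lemma minRep_mul_aux {I : Set B} {κ : W} (hκ : isMinRep cs I κ) :
    ∀ n (z : W), z ∈ parab cs I → cs.length z ≤ n →
      cs.length (κ * z) = cs.length κ + cs.length z := by
  intro n
  induction n using Nat.strong_induction_on with
  | _ n ih =>
    intro z hz hzn
    rcases eq_or_ne z 1 with rfl | hne
    · simp
    · obtain ⟨σ, hσred, hσI, hσprod⟩ := mem_parab_reduced cs hz
      have hσne : σ ≠ [] := by
        rintro rfl
        rw [cs.wordProd_nil] at hσprod
        exact hne hσprod.symm
      obtain ⟨σ₁, c, rfl⟩ : ∃ σ₁ c, σ = σ₁ ++ [c] :=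
        ⟨σ.dropLast, σ.getLast hσne, (List.dropLast_append_getLast hσne).symm⟩
      have hc : c ∈ I := hσI c (by simp)
      have hσ₁red : cs.IsReduced σ₁ := (isReduced_append cs hσred).1
      have hσ₁I : ∀ c' ∈ σ₁, c' ∈ I := fun c' hc' => hσI c' (by simp [hc'])
      have hz₁mem : cs.wordProd σ₁ ∈ parab cs I := parab_word_mem cs hσ₁I
      have hzlen : cs.length z = σ₁.length + 1 := by
        rw [← hσprod]
        have h1 : cs.length (cs.wordProd (σ₁ ++ [c])) = (σ₁ ++ [c]).length := hσred
        rw [h1, List.length_append, List.length_singleton]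
      have hz₁len : cs.length (cs.wordProd σ₁) = σ₁.length := hσ₁red
      have hzz : z = cs.wordProd σ₁ * cs.simple c := by
        rw [← hσprod, cs.wordProd_append, cs.wordProd_singleton]
      have ihz : cs.length (κ * cs.wordProd σ₁)
          = cs.length κ + cs.length (cs.wordProd σ₁) :=
        ih (n - 1) (by omega) _ hz₁mem (by omega)
      rcases cs.length_mul_simple (κ * cs.wordProd σ₁) c with hp | hm
      · conv_lhs => rw [hzz, ← mul_assoc]
        rw [hp, ihz, hz₁len, hzlen]
        omega
      · exfalso
        obtain ⟨κw, hκwred, hκw⟩ := cs.exists_reduced_word' κ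
        have hκlen : cs.length κ = κw.length := by rw [hκw]; exact hκwred
        have hρprod : cs.wordProd (κw ++ σ₁) = κ * cs.wordProd σ₁ := by
          rw [cs.wordProd_append, ← hκw]
        have hlt : cs.length (κ * cs.wordProd σ₁ * cs.simple c)
            < cs.length (κ * cs.wordProd σ₁) := by omega
        obtain ⟨A, hA, hAlen, hAprod⟩ :=
          strong_exchange_right cs (cs.isReflection_simple c) hlt (κw ++ σ₁) hρprod
        obtain ⟨A₁, A₂, rfl, hA1, hA2⟩ := List.sublist_append_iff.mp hA
        have hlen1 : A₁.length ≤ κw.length := hA1.length_le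
        have hlen2 : A₂.length ≤ σ₁.length := hA2.length_le
        rw [List.length_append, List.length_append] at hAlen
        rcases Nat.lt_or_ge A₂.length σ₁.length with hcase | hcase
        · have heq1 : A₁ = κw := hA1.eq_of_length (by omega)
          have hA₂prod : cs.wordProd A₂ = cs.wordProd σ₁ * cs.simple c := by
            have h5 : cs.wordProd (A₁ ++ A₂) = κ * cs.wordProd σ₁ * cs.simple c := hAprod
            rw [heq1, cs.wordProd_append, ← hκw, mul_assoc] at h5
            exact mul_left_cancel h5
          have h6 := cs.length_wordProd_le A₂
          rw [hA₂prod, ← hzz] at h6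
          omega
        · have heq2 : A₂ = σ₁ := hA2.eq_of_length (by omega)
          have hq : cs.wordProd A₁
              = κ * (cs.wordProd σ₁ * cs.simple c * (cs.wordProd σ₁)⁻¹) := by
            have h5 : cs.wordProd (A₁ ++ A₂) = κ * cs.wordProd σ₁ * cs.simple c := hAprod
            rw [heq2, cs.wordProd_append] at h5
            have h7 : cs.wordProd A₁
                = κ * cs.wordProd σ₁ * cs.simple c * (cs.wordProd σ₁)⁻¹ := by
              rw [← h5]
              group
            rw [h7]
            group
          have hqmem : cs.wordProd σ₁ * cs.simple c * (cs.wordProd σ₁)⁻¹ ∈ parab cs I :=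
            mul_mem (mul_mem hz₁mem (simple_mem_parab cs hc)) (inv_mem hz₁mem)
          have h8 := hκ _ hqmem
          have h9 := cs.length_wordProd_le A₁
          rw [hq] at h9
          omega

lemma minRep_mul {I : Set B} {κ : W} (hκ : isMinRep cs I κ) {z : W} (hz : z ∈ parab cs I) :
    cs.length (κ * z) = cs.length κ + cs.length z :=
  minRep_mul_aux cs hκ (cs.length z) z hz le_rfl

end DesingSMT

namespace DesingSMT

/-- Let `W` be a finite Weyl group, `W_P` a (standard) parabolic
subgroup, `κ ∈ W^P`, and `w ∈ W` with `E(w,κ) ≠ ∅` (witnessed by `u = max E(w,κ)`).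
Let `s` be a simple reflection with `sw < w`, and let `sκ` denote the minimal coset
representative `κ₂` of `sκW_P`.  Then: (1) if `sκ > κ`, then
`max E(w,κ) = max E(sw,κ)`; (2) if `sκ ≤ κ`, then `max E(w,κ) = s * max E(sw,sκ)`,
where `*` is the Demazure product. -/
theorem statement8 {B W : Type*} [Group W] [Finite W] {M : CoxeterMatrix B}
    (cs : CoxeterSystem M W) (hM : IsCrystallographic M)
    (I : Set B) (i : B) (w κ κ₂ u : W)
    (hκ : isMinRep cs I κ)
    (hκ₂min : isMinRep cs I κ₂)
    (hκ₂ : κ₂⁻¹ * (cs.simple i * κ) ∈ parab cs I)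
    (hsw : cs.length (cs.simple i * w) < cs.length w)
    (hu : isMaxE cs I w κ u) :
    ((cBruhatLE cs κ κ₂ ∧ κ ≠ κ₂) →
      ∀ u' : W, isMaxE cs I (cs.simple i * w) κ u' → u = u') ∧
    (cBruhatLE cs κ₂ κ →
      ∀ u' d : W, isMaxE cs I (cs.simple i * w) κ₂ u' →
        isDemazureProd cs (cs.simple i) u' d → u = d) := by
  obtain ⟨⟨huw, hucos⟩, humax⟩ := hu
  have hzP : κ⁻¹ * u ∈ parab cs I := by
    have h2 := inv_mem hucos
    rwa [mul_inv_rev, inv_inv] at h2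
  set z := κ⁻¹ * u with hzdef
  have hu_eq : u = κ * z := by rw [hzdef, ← mul_assoc, mul_inv_cancel, one_mul]
  have hpP : κ₂⁻¹ * (cs.simple i * κ) ∈ parab cs I := hκ₂
  set p := κ₂⁻¹ * (cs.simple i * κ) with hpdef
  have hsκp : cs.simple i * κ = κ₂ * p := by
    rw [hpdef, ← mul_assoc, mul_inv_cancel, one_mul]
  have hlu : cs.length u = cs.length κ + cs.length z := by
    conv_lhs => rw [hu_eq]
    exact minRep_mul cs hκ hzP
  have hlsκ : cs.length (cs.simple i * κ) = cs.length κ₂ + cs.length p := by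
    conv_lhs => rw [hsκp]
    exact minRep_mul cs hκ₂min hpP
  have hswasc : cs.length (cs.simple i * w)
      < cs.length (cs.simple i * (cs.simple i * w)) := by
    rw [cs.simple_mul_simple_cancel_left]
    exact hsw
  have hprep : ∀ x : W, cBruhatLE cs x (cs.simple i * w) →
      cBruhatLE cs x w ∧ cBruhatLE cs (cs.simple i * x) w := by
    intro x hx
    have h2 := cle_mul_simple_left cs i hswasc hx
    rwa [cs.simple_mul_simple_cancel_left] at h2
  constructor
  · rintro ⟨hle, hne⟩ u' hu'
    obtain ⟨⟨hu'sw, hu'cos⟩, hu'max⟩ := hu'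
    have hlκlt : cs.length κ < cs.length κ₂ := by
      rcases Nat.lt_or_ge (cs.length κ) (cs.length κ₂) with h | h
      · exact h
      · exact absurd (cle_eq_of_length_ge cs hle h) hne
    have key : cs.simple i * κ = κ₂ ∧ cs.length κ₂ = cs.length κ + 1 := by
      rcases cs.length_simple_mul κ i with hA | hA
      · have hp0 : cs.length p = 0 := by omega
        have hp1 : p = 1 := cs.length_eq_zero_iff.mp hp0
        rw [hp1, mul_one] at hsκp
        exact ⟨hsκp, by omega⟩
      · exfalso
        omega
    obtain ⟨hsκκ₂, hκ₂len⟩ := key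
    have hsu_eq : cs.simple i * u = κ₂ * z := by
      conv_lhs => rw [hu_eq, ← mul_assoc, hsκκ₂]
    have hsuasc : cs.length u < cs.length (cs.simple i * u) := by
      rw [hsu_eq, minRep_mul cs hκ₂min hzP]
      omega
    have husw : cBruhatLE cs u (cs.simple i * w) := cle_Z2 cs i hsw hsuasc huw
    have h1 : cBruhatLE cs u u' := hu'max u ⟨husw, hucos⟩
    have h2 : cBruhatLE cs u' u := humax u' ⟨(hprep u' hu'sw).1, hu'cos⟩
    exact cle_antisymm cs h1 h2
  · rintro hle u' d hu' hd
    obtain ⟨⟨hu'sw, hu'cos⟩, hu'max⟩ := hu'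
    have hz'P : κ₂⁻¹ * u' ∈ parab cs I := by
      have h2 := inv_mem hu'cos
      rwa [mul_inv_rev, inv_inv] at h2
    set z' := κ₂⁻¹ * u' with hz'def
    have hu'_eq : u' = κ₂ * z' := by rw [hz'def, ← mul_assoc, mul_inv_cancel, one_mul]
    have hlu' : cs.length u' = cs.length κ₂ + cs.length z' := by
      conv_lhs => rw [hu'_eq]
      exact minRep_mul cs hκ₂min hz'P
    have hleκ : cs.length κ₂ ≤ cs.length κ := cle_length cs hle
    have hsκ₂ : cs.simple i * κ₂ = κ * p⁻¹ := by
      have h3 : κ₂ = cs.simple i * κ * p⁻¹ := by rw [hsκp]; group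
      rw [h3, mul_assoc]
      exact cs.simple_mul_simple_cancel_left i
    have hlsκ₂ : cs.length (cs.simple i * κ₂) = cs.length κ + cs.length p := by
      rw [hsκ₂, minRep_mul cs hκ (inv_mem hpP), cs.length_inv]
    have hq'P : p⁻¹ * z' ∈ parab cs I := mul_mem (inv_mem hpP) hz'P
    have hsu'_eq : cs.simple i * u' = κ * (p⁻¹ * z') := by
      conv_lhs => rw [hu'_eq, ← mul_assoc, hsκ₂, mul_assoc]
    have hsu'cos : (cs.simple i * u')⁻¹ * κ ∈ parab cs I := by
      rw [hsu'_eq]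
      have h4 : (κ * (p⁻¹ * z'))⁻¹ * κ = (p⁻¹ * z')⁻¹ := by group
      rw [h4]
      exact inv_mem hq'P
    have hpzP : p * z ∈ parab cs I := mul_mem hpP hzP
    have hsu_eq : cs.simple i * u = κ₂ * (p * z) := by
      conv_lhs => rw [hu_eq, ← mul_assoc, hsκp, mul_assoc]
    have hsucos : (cs.simple i * u)⁻¹ * κ₂ ∈ parab cs I := by
      rw [hsu_eq]
      have h4 : (κ₂ * (p * z))⁻¹ * κ₂ = (p * z)⁻¹ := by group
      rw [h4]
      exact inv_mem hpzP
    have hsud : cs.length (cs.simple i * u) < cs.length u := by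
      rcases cs.length_simple_mul κ i with hA | hA
      · -- s κ > κ : here κ₂ = κ and maximality forces a descent
        have hκ₂κ : κ₂ = κ := by
          apply cle_eq_of_length_ge cs hle
          rcases cs.length_simple_mul κ₂ i with hB | hB <;> omega
        rcases cs.length_simple_mul u i with hC | hC
        · exfalso
          have husw : cBruhatLE cs u (cs.simple i * w) :=
            cle_Z2 cs i hsw (by omega) huw
          have hsuw : cBruhatLE cs (cs.simple i * u) w := (hprep u husw).2
          have hsuE : cs.simple i * u ∈ cosetE cs I w κ :=
            ⟨hsuw, by rw [← hκ₂κ]; exact hsucos⟩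
          have := cle_length cs (humax _ hsuE)
          omega
        · omega
      · -- s κ < κ : then p = 1 and length computation is direct
        have hp0 : cs.length p = 0 := by
          rcases cs.length_simple_mul κ₂ i with hB | hB <;> omega
        have hp1 : p = 1 := cs.length_eq_zero_iff.mp hp0
        have h5 : cs.length (cs.simple i * u) = cs.length κ₂ + cs.length z := by
          rw [hsu_eq, hp1, one_mul, minRep_mul cs hκ₂min hzP]
        omega
    have hsusw : cBruhatLE cs (cs.simple i * u) (cs.simple i * w) :=
      cle_Z1 cs i hsw hsud huw
    have hsuu' : cBruhatLE cs (cs.simple i * u) u' := hu'max _ ⟨hsusw, hsucos⟩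
    have hu_ssu : u = cs.simple i * (cs.simple i * u) :=
      (cs.simple_mul_simple_cancel_left (w := u) i).symm
    have huD : u ∈ demazureSet cs (cs.simple i) u' :=
      ⟨cs.simple i, cs.simple i * u, cle_refl cs _, hsuu', hu_ssu⟩
    rcases cs.length_simple_mul u' i with hD | hD
    · -- ascent at u'
      have hsu'w : cBruhatLE cs (cs.simple i * u') w := (hprep u' hu'sw).2
      have hsu'u : cBruhatLE cs (cs.simple i * u') u := humax _ ⟨hsu'w, hsu'cos⟩
      exact demazure_simple_max_asc cs (by omega) hd hsu'u huD
    · -- descent at u'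
      have hu'desc : cs.length (cs.simple i * u') < cs.length u' := by omega
      have hdu' : d = u' := demazure_simple_max_desc cs hu'desc hd
      have hκ₂κ : κ₂ = κ := by
        apply cle_eq_of_length_ge cs hle
        rcases cs.length_simple_mul κ i with hA | hA
        · rcases cs.length_simple_mul κ₂ i with hB | hB <;> omega
        · exfalso
          have hp0 : cs.length p = 0 := by
            rcases cs.length_simple_mul κ₂ i with hB | hB <;> omega
          have hp1 : p = 1 := cs.length_eq_zero_iff.mp hp0
          have h5 : cs.length (cs.simple i * u') = cs.length κ + cs.length z' := by
            rw [hsu'_eq, hp1, inv_one, one_mul, minRep_mul cs hκ hz'P]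
          omega
      have hu'u : cBruhatLE cs u' u :=
        humax u' ⟨(hprep u' hu'sw).1, by rw [← hκ₂κ]; exact hu'cos⟩
      have hsuasc2 : cs.length (cs.simple i * u)
          < cs.length (cs.simple i * (cs.simple i * u)) := by
        rw [cs.simple_mul_simple_cancel_left]
        exact hsud
      have h1 : cBruhatLE cs (cs.simple i * u) (cs.simple i * u') :=
        cle_Z2 cs i hu'desc hsuasc2 hsuu'
      have hsu'asc : cs.length (cs.simple i * u')
          < cs.length (cs.simple i * (cs.simple i * u')) := by
        rw [cs.simple_mul_simple_cancel_left]
        exact hu'desc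
      have h2 := (cle_mul_simple_left cs i hsu'asc h1).2
      rw [cs.simple_mul_simple_cancel_left, cs.simple_mul_simple_cancel_left] at h2
      rw [hdu']
      exact cle_antisymm cs h2 hu'u


end DesingSMT
end
end

section
/- Let W = S_n, let P_d be the maximal parabolic subgroup associated to the d-th simple root, and let u_d be the minimal element of W with u_d ≡ w_0 mod W_{P_d}. Let w ≥ u_d and let κ ∈ W^{P_i} for an arbitrary i, with E(w,κ) ≠ ∅. Assume max E(w,κ) ≥ u_d. Then for every v ≥ u_d with E(v,κ) ≠ ∅, one has max E(v,κ) ≥ u_d. -/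
/-!
Common framework: the symmetric group `S_n` (the Weyl group of `GL(n)`) with its simple
reflections, length (inversion number), Bruhat order, longest element, and standard
parabolic subgroups.
-/

noncomputable section

namespace DesingSMT

variable (n : ℕ)

/-- The simple reflection `s_i = (i, i+1)` (`1`-based, `i ∈ [n-1]`) in `S_n`;
junk value `1` for `i` out of range. -/
def sTrans (i : ℕ) : Equiv.Perm (Fin n) :=
  if h : 1 ≤ i ∧ i < n then Equiv.swap ⟨i - 1, by omega⟩ ⟨i, h.2⟩ else 1

/-- The product `s_{l_1} ⋯ s_{l_t}` of the simple reflections of a list of letters. -/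
def prodList (l : List ℕ) : Equiv.Perm (Fin n) := (l.map (sTrans n)).prod

/-- The number of inversions of a permutation, i.e. its Coxeter length. -/
def invCount (w : Equiv.Perm (Fin n)) : ℕ :=
  (Finset.univ.filter (fun p : Fin n × Fin n => p.1 < p.2 ∧ w p.2 < w p.1)).card

/-- The Bruhat order on `S_n`: `u ≤ w` iff `w` is obtained from `u` by successively
multiplying by transpositions which increase the length. -/
def bruhatLE (u w : Equiv.Perm (Fin n)) : Prop :=
  Relation.ReflTransGen
    (fun x y => (∃ a b : Fin n, a ≠ b ∧ y = x * Equiv.swap a b) ∧ invCount n x < invCount n y)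
    u w

/-- The longest element `w₀` of `S_n`. -/
def w0 : Equiv.Perm (Fin n) := Fin.revPerm

/-- The maximal (standard) parabolic subgroup `W_{P_d}` of `S_n` generated by all the
simple reflections except `s_d`. -/
def parabS (d : ℕ) : Subgroup (Equiv.Perm (Fin n)) :=
  Subgroup.closure {x | ∃ j : ℕ, 1 ≤ j ∧ j < n ∧ j ≠ d ∧ x = sTrans n j}

end DesingSMT

namespace DesingSMT

open Finset Equiv

variable {n : ℕ}

lemma invCount_eq_sum (z : Equiv.Perm (Fin n)) :
    invCount n z = ∑ pq : Fin n × Fin n, if pq.1 < pq.2 ∧ z pq.2 < z pq.1 then 1 else 0 := by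
  unfold invCount
  rw [Finset.card_filter]

lemma invCount_mul_swap_eq_sum (z : Equiv.Perm (Fin n)) (a b : Fin n) :
    invCount n (z * Equiv.swap a b)
      = ∑ pq : Fin n × Fin n,
          if Equiv.swap a b pq.1 < Equiv.swap a b pq.2 ∧ z pq.2 < z pq.1 then 1 else 0 := by
  rw [invCount_eq_sum]
  refine (Fintype.sum_equiv (Equiv.prodCongr (Equiv.swap a b) (Equiv.swap a b))
    (fun pq => if Equiv.swap a b pq.1 < Equiv.swap a b pq.2 ∧ z pq.2 < z pq.1 then 1 else 0)
    (fun pq => if pq.1 < pq.2 ∧ (z * Equiv.swap a b) pq.2 < (z * Equiv.swap a b) pq.1 then 1 else 0)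
    ?_).symm
  intro pq
  simp [Equiv.prodCongr_apply, Equiv.Perm.mul_apply, Equiv.swap_apply_self]

/-- exact behaviour of `invCount` under an *adjacent* descent swap. -/
lemma invCount_adj_swap {z : Equiv.Perm (Fin n)} {a b : Fin n} (hab : (b : ℕ) = (a : ℕ) + 1)
    (h : (z b : ℕ) < (z a : ℕ)) :
    invCount n (z * Equiv.swap a b) + 1 = invCount n z := by
  have hne : a ≠ b := by intro hh; rw [hh] at hab; omega
  rw [invCount_mul_swap_eq_sum, invCount_eq_sum]
  rw [← Finset.sum_erase_add _ _ (Finset.mem_univ (a, b)),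
      ← Finset.sum_erase_add _ _ (Finset.mem_univ (a, b))]
  have hterm1 : (if Equiv.swap a b (a, b).1 < Equiv.swap a b (a, b).2 ∧ z (a, b).2 < z (a, b).1
      then 1 else 0) = 0 := by
    simp only [Equiv.swap_apply_left, Equiv.swap_apply_right]
    have : ¬ (b < a) := by
      simp only [Fin.lt_def]; omega
    simp [this]
  have hterm2 : (if (a, b).1 < (a, b).2 ∧ z (a, b).2 < z (a, b).1 then 1 else 0) = 1 := by
    have h1 : a < b := by simp only [Fin.lt_def]; omega
    have h2 : z b < z a := by simp only [Fin.lt_def]; omega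
    simp [h1, h2]
  rw [hterm1, hterm2, add_zero]
  congr 1
  refine Finset.sum_congr rfl ?_
  rintro ⟨p, q⟩ hpq
  have hpq' : (p, q) ≠ (a, b) := (Finset.mem_erase.1 hpq).1
  by_cases hz : z q < z p
  · simp only [hz, and_true]
    congr 1
    have hval : ∀ c : Fin n, c ≠ a → c ≠ b → Equiv.swap a b c = c := fun c h1 h2 =>
      Equiv.swap_apply_of_ne_of_ne h1 h2
    have hzval : (z q : ℕ) < z p := hz
    by_cases hpa : p = a
    · by_cases hqb : q = b
      · exact absurd (Prod.ext hpa hqb) hpq'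
      · by_cases hqa : q = a
        · subst hpa hqa; simp
        · rw [hpa, Equiv.swap_apply_left, hval q hqa hqb]
          have hq1 : (q : ℕ) ≠ a := fun hh => hqa (Fin.ext hh)
          have hq2 : (q : ℕ) ≠ b := fun hh => hqb (Fin.ext hh)
          simp only [Fin.lt_def]
          exact propext (by constructor <;> intro <;> omega)
    · by_cases hpb : p = b
      · by_cases hqa : q = a
        · -- (b, a) : z a < z b contradicts h
          subst hpb hqa
          omega
        · by_cases hqb : q = b
          · subst hpb hqb; simp
          · rw [hpb, Equiv.swap_apply_right, hval q hqa hqb]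
            have hq1 : (q : ℕ) ≠ a := fun hh => hqa (Fin.ext hh)
            have hq2 : (q : ℕ) ≠ b := fun hh => hqb (Fin.ext hh)
            simp only [Fin.lt_def]
            exact propext (by constructor <;> intro <;> omega)
      · rw [hval p hpa hpb]
        by_cases hqa : q = a
        · rw [hqa, Equiv.swap_apply_left]
          have hp1 : (p : ℕ) ≠ a := fun hh => hpa (Fin.ext hh)
          have hp2 : (p : ℕ) ≠ b := fun hh => hpb (Fin.ext hh)
          simp only [Fin.lt_def]
          exact propext (by constructor <;> intro <;> omega)
        · by_cases hqb : q = b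
          · rw [hqb, Equiv.swap_apply_right]
            have hp1 : (p : ℕ) ≠ a := fun hh => hpa (Fin.ext hh)
            have hp2 : (p : ℕ) ≠ b := fun hh => hpb (Fin.ext hh)
            simp only [Fin.lt_def]
            exact propext (by constructor <;> intro <;> omega)
          · rw [hval q hqa hqb]
  · simp [hz]

end DesingSMT

namespace DesingSMT

open Finset Equiv

variable {n : ℕ}

lemma invCount_adj_swap_asc {z : Equiv.Perm (Fin n)} {a b : Fin n} (hab : (b : ℕ) = (a : ℕ) + 1)
    (h : (z a : ℕ) < (z b : ℕ)) :
    invCount n (z * Equiv.swap a b) = invCount n z + 1 := by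
  set z' := z * Equiv.swap a b with hz'
  have hne : a ≠ b := by intro hh; rw [hh] at hab; omega
  have ha : z' a = z b := by simp [hz', Equiv.Perm.mul_apply]
  have hb : z' b = z a := by simp [hz', Equiv.Perm.mul_apply]
  have hzz : z' * Equiv.swap a b = z := by
    rw [hz', mul_assoc, Equiv.swap_mul_self, mul_one]
  have := invCount_adj_swap (z := z') hab (by rw [ha, hb]; exact h)
  rw [hzz] at this
  omega

lemma swap_decomp {a c b : Fin n} (hac : a ≠ c) (hab : a ≠ b) (hcb : c ≠ b) :
    Equiv.swap a b = Equiv.swap a c * Equiv.swap c b * Equiv.swap a c := by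
  have := Equiv.swap_apply_apply (Equiv.swap a c) c b
  rw [Equiv.swap_apply_right, Equiv.swap_apply_of_ne_of_ne (Ne.symm hab) (Ne.symm hcb)] at this
  rw [this, Equiv.swap_inv]

/-- a non-adjacent descent swap decreases the inversion number. -/
lemma invCount_swap_lt {z : Equiv.Perm (Fin n)} {a b : Fin n} (hab : (a : ℕ) < (b : ℕ))
    (h : (z b : ℕ) < (z a : ℕ)) :
    invCount n (z * Equiv.swap a b) < invCount n z := by
  have key : ∀ m : ℕ, ∀ (z : Equiv.Perm (Fin n)) (a b : Fin n), (b : ℕ) - (a : ℕ) = m →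
      (a : ℕ) < (b : ℕ) → (z b : ℕ) < (z a : ℕ) →
      invCount n (z * Equiv.swap a b) < invCount n z := by
    intro m
    induction m using Nat.strong_induction_on with
    | _ m IH =>
      intro z a b hm hab h
      by_cases hadj : (b : ℕ) = (a : ℕ) + 1
      · have := invCount_adj_swap hadj h; omega
      · have hcn : (a : ℕ) + 1 < n := lt_trans (by omega) b.isLt
        set c : Fin n := ⟨(a : ℕ) + 1, hcn⟩ with hc
        have hcval : (c : ℕ) = (a : ℕ) + 1 := rfl
        have hac : a ≠ c := by
          intro hh; have h2 := congrArg Fin.val hh; rw [hcval] at h2; omega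
        have hcb : c ≠ b := by
          intro hh; have h2 := congrArg Fin.val hh; rw [hcval] at h2; omega
        have habne : a ≠ b := by intro hh; rw [hh] at hab; omega
        have hdec := swap_decomp (n := n) hac habne hcb
        set z1 := z * Equiv.swap a c with hz1
        set z2 := z1 * Equiv.swap c b with hz2
        set z3 := z2 * Equiv.swap a c with hz3
        have hz3eq : z * Equiv.swap a b = z3 := by
          rw [hdec, hz3, hz2, hz1]; group
        have hz1a : z1 a = z c := by simp [hz1, Equiv.Perm.mul_apply]
        have hz1c : z1 c = z a := by simp [hz1, Equiv.Perm.mul_apply]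
        have hz1b : z1 b = z b := by
          simp [hz1, Equiv.Perm.mul_apply,
            Equiv.swap_apply_of_ne_of_ne (Ne.symm habne) (Ne.symm hcb)]
        have hz2a : z2 a = z c := by
          simp only [hz2, Equiv.Perm.mul_apply,
            Equiv.swap_apply_of_ne_of_ne hac habne]
          exact hz1a
        have hz2c : z2 c = z b := by
          simp only [hz2, Equiv.Perm.mul_apply, Equiv.swap_apply_left]
          exact hz1b
        have e1a : ((z1 a : ℕ)) = ((z c : ℕ)) := congrArg Fin.val hz1a
        have e1c : ((z1 c : ℕ)) = ((z a : ℕ)) := congrArg Fin.val hz1c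
        have e1b : ((z1 b : ℕ)) = ((z b : ℕ)) := congrArg Fin.val hz1b
        have e2a : ((z2 a : ℕ)) = ((z c : ℕ)) := congrArg Fin.val hz2a
        have e2c : ((z2 c : ℕ)) = ((z b : ℕ)) := congrArg Fin.val hz2c
        have hd1 : (c : ℕ) < (b : ℕ) := by omega
        have hd2 : (b : ℕ) - (c : ℕ) < m := by omega
        have hzcb : z c ≠ z b := fun hh => hcb (z.injective hh)
        have hzca : z c ≠ z a := fun hh => hac (z.injective hh).symm
        have hzcb' : ((z c : ℕ)) ≠ ((z b : ℕ)) := fun hh => hzcb (Fin.ext hh)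
        have hzca' : ((z c : ℕ)) ≠ ((z a : ℕ)) := fun hh => hzca (Fin.ext hh)
        have s2 : invCount n z2 < invCount n z1 :=
          IH _ hd2 z1 c b rfl hd1 (by omega)
        rw [hz3eq]
        rcases lt_trichotomy ((z c : ℕ)) ((z b : ℕ)) with hvc | hvc | hvc
        · -- z c < z b < z a : descent at (a,c), then ascent at end
          have s1 : invCount n z1 + 1 = invCount n z :=
            invCount_adj_swap (z := z) (a := a) (b := c) hcval (by omega)
          have s3 : invCount n z3 = invCount n z2 + 1 :=
            invCount_adj_swap_asc (z := z2) (a := a) (b := c) hcval (by omega)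
          omega
        · exact absurd (Fin.ext hvc) hzcb
        · rcases lt_trichotomy ((z c : ℕ)) ((z a : ℕ)) with hvca | hvca | hvca
          · have s1 : invCount n z1 + 1 = invCount n z :=
              invCount_adj_swap (z := z) (a := a) (b := c) hcval (by omega)
            have s3 : invCount n z3 + 1 = invCount n z2 :=
              invCount_adj_swap (z := z2) (a := a) (b := c) hcval (by omega)
            omega
          · exact absurd (Fin.ext hvca) hzca
          · have s1 : invCount n z1 = invCount n z + 1 :=
              invCount_adj_swap_asc (z := z) (a := a) (b := c) hcval (by omega)
            have s3 : invCount n z3 + 1 = invCount n z2 :=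
              invCount_adj_swap (z := z2) (a := a) (b := c) hcval (by omega)
            omega
        done
  exact key ((b : ℕ) - (a : ℕ)) z a b rfl hab h

end DesingSMT

namespace DesingSMT

open Finset Equiv

variable {n : ℕ}

/-- number of positions `c ≤ p` whose value is `≥ q`. -/
def fcnt (z : Equiv.Perm (Fin n)) (p q : ℕ) : ℕ :=
  (Finset.univ.filter (fun c : Fin n => (c : ℕ) ≤ p ∧ q ≤ ((z c : ℕ)))).card

lemma fcnt_eq_sum (z : Equiv.Perm (Fin n)) (p q : ℕ) :
    fcnt z p q = ∑ c : Fin n, if (c : ℕ) ≤ p ∧ q ≤ ((z c : ℕ)) then 1 else 0 := by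
  unfold fcnt
  rw [Finset.card_filter]

lemma fcnt_mul_swap {z : Equiv.Perm (Fin n)} {a b : Fin n} (hab : (a : ℕ) < (b : ℕ))
    (h : (z a : ℕ) < (z b : ℕ)) (p q : ℕ) :
    fcnt (z * Equiv.swap a b) p q
      = fcnt z p q + (if (a : ℕ) ≤ p ∧ p < (b : ℕ) ∧ (z a : ℕ) < q ∧ q ≤ (z b : ℕ)
          then 1 else 0) := by
  have hne : a ≠ b := fun hh => by rw [hh] at hab; omega
  have hre : fcnt (z * Equiv.swap a b) p q
      = ∑ c : Fin n, if ((Equiv.swap a b c : Fin n) : ℕ) ≤ p ∧ q ≤ ((z c : ℕ)) then 1 else 0 := by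
    rw [fcnt_eq_sum]
    refine (Fintype.sum_equiv (Equiv.swap a b)
      (fun c => if ((Equiv.swap a b c : Fin n) : ℕ) ≤ p ∧ q ≤ ((z c : ℕ)) then 1 else 0)
      (fun c => if (c : ℕ) ≤ p ∧ q ≤ (((z * Equiv.swap a b) c : ℕ)) then 1 else 0)
      ?_).symm
    intro c
    simp [Equiv.Perm.mul_apply, Equiv.swap_apply_self]
  rw [hre, fcnt_eq_sum]
  have hbmem : b ∈ (Finset.univ : Finset (Fin n)).erase a := by
    simp [Ne.symm hne]
  rw [← Finset.sum_erase_add _ _ (Finset.mem_univ a),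
      ← Finset.sum_erase_add _ _ hbmem,
      ← Finset.sum_erase_add _ _ (Finset.mem_univ a),
      ← Finset.sum_erase_add _ _ hbmem]
  have hcongr : ∀ c ∈ ((Finset.univ : Finset (Fin n)).erase a).erase b,
      (if ((Equiv.swap a b c : Fin n) : ℕ) ≤ p ∧ q ≤ ((z c : ℕ)) then 1 else 0)
        = (if (c : ℕ) ≤ p ∧ q ≤ ((z c : ℕ)) then 1 else 0) := by
    intro c hc
    rcases Finset.mem_erase.1 hc with ⟨hcb, hc2⟩
    rcases Finset.mem_erase.1 hc2 with ⟨hca, _⟩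
    rw [Equiv.swap_apply_of_ne_of_ne hca hcb]
  rw [Finset.sum_congr rfl hcongr]
  have hsa : ((Equiv.swap a b a : Fin n) : ℕ) = (b : ℕ) := by rw [Equiv.swap_apply_left]
  have hsb : ((Equiv.swap a b b : Fin n) : ℕ) = (a : ℕ) := by rw [Equiv.swap_apply_right]
  rw [hsa, hsb]
  split_ifs <;> omega

/-- a Bruhat step (weakly) increases every `fcnt`. -/
lemma fcnt_le_of_step {x y : Equiv.Perm (Fin n)}
    (hs : ∃ a b : Fin n, a ≠ b ∧ y = x * Equiv.swap a b)
    (hinv : invCount n x < invCount n y) (p q : ℕ) :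
    fcnt x p q ≤ fcnt y p q := by
  obtain ⟨a, b, hne, hy⟩ := hs
  have hvalne : (a : ℕ) ≠ (b : ℕ) := fun hh => hne (Fin.ext hh)
  rcases Nat.lt_or_ge (a : ℕ) (b : ℕ) with hab | hab
  · have hzab : (x a : ℕ) ≠ (x b : ℕ) := fun hh => hne (x.injective (Fin.ext hh))
    rcases Nat.lt_or_ge (x a : ℕ) (x b : ℕ) with hv | hv
    · rw [hy, fcnt_mul_swap hab hv]; omega
    · exfalso
      have := invCount_swap_lt (z := x) hab (by omega)
      rw [← hy] at this
      omega
  · have hab' : (b : ℕ) < (a : ℕ) := by omega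
    have hy' : y = x * Equiv.swap b a := by rw [hy, Equiv.swap_comm]
    have hzab : (x a : ℕ) ≠ (x b : ℕ) := fun hh => hne (x.injective (Fin.ext hh))
    rcases Nat.lt_or_ge (x b : ℕ) (x a : ℕ) with hv | hv
    · rw [hy', fcnt_mul_swap hab' hv]; omega
    · exfalso
      have := invCount_swap_lt (z := x) hab' (by omega)
      rw [← hy'] at this
      omega

lemma bruhatLE_dom {z v : Equiv.Perm (Fin n)} (h : bruhatLE n z v) (p q : ℕ) :
    fcnt z p q ≤ fcnt v p q := by
  induction h with
  | refl => exact le_refl _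
  | tail _ hstep ih =>
    exact le_trans ih (fcnt_le_of_step hstep.1 hstep.2 p q)

lemma bruhatLE_invCount_le {x y : Equiv.Perm (Fin n)} (h : bruhatLE n x y) :
    invCount n x ≤ invCount n y := by
  induction h with
  | refl => exact le_refl _
  | tail _ hstep ih => omega

lemma bruhatLE_eq_of_invCount_le {x y : Equiv.Perm (Fin n)} (h : bruhatLE n x y)
    (hc : invCount n y ≤ invCount n x) : x = y := by
  rcases Relation.ReflTransGen.cases_head h with rfl | ⟨c, hstep, hrest⟩
  · rfl
  · exfalso
    have h1 := bruhatLE_invCount_le hrest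
    have h2 := hstep.2
    omega

end DesingSMT

namespace DesingSMT

open Finset Equiv

variable {n : ℕ}

lemma fcnt_split (z : Equiv.Perm (Fin n)) (a : Fin n) (p q : ℕ) (hap : (a : ℕ) ≤ p) :
    fcnt z p q
      = (Finset.univ.filter fun c : Fin n => (c : ℕ) < (a : ℕ) ∧ q ≤ ((z c : ℕ))).card
        + ((if q ≤ ((z a : ℕ)) then 1 else 0)
        + (Finset.univ.filter fun c : Fin n =>
            (a : ℕ) < (c : ℕ) ∧ (c : ℕ) ≤ p ∧ q ≤ ((z c : ℕ))).card) := by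
  rw [fcnt_eq_sum, Finset.card_filter, Finset.card_filter]
  have hpt : ∀ c : Fin n,
      (if (c : ℕ) ≤ p ∧ q ≤ ((z c : ℕ)) then 1 else 0)
        = ((if (c : ℕ) < (a : ℕ) ∧ q ≤ ((z c : ℕ)) then 1 else 0)
          + ((if c = a then (if q ≤ ((z a : ℕ)) then 1 else 0) else 0)
          + (if (a : ℕ) < (c : ℕ) ∧ (c : ℕ) ≤ p ∧ q ≤ ((z c : ℕ)) then 1 else 0))) := by
    intro c
    by_cases hca : c = a
    · subst hca
      simp only [if_pos rfl]
      split_ifs <;> omega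
    · have : (c : ℕ) ≠ (a : ℕ) := fun hh => hca (Fin.ext hh)
      rw [if_neg hca]
      split_ifs <;> omega
  rw [Finset.sum_congr rfl (fun c _ => hpt c), Finset.sum_add_distrib,
    Finset.sum_add_distrib, Finset.sum_ite_eq' Finset.univ a
      (fun _ => (if q ≤ ((z a : ℕ)) then 1 else 0)), if_pos (Finset.mem_univ a)]

lemma fcnt_lowpart_congr {z v : Equiv.Perm (Fin n)} {a : Fin n}
    (hagree : ∀ c : Fin n, (c : ℕ) < (a : ℕ) → z c = v c) (q : ℕ) :
    (Finset.univ.filter fun c : Fin n => (c : ℕ) < (a : ℕ) ∧ q ≤ ((z c : ℕ))).card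
      = (Finset.univ.filter fun c : Fin n => (c : ℕ) < (a : ℕ) ∧ q ≤ ((v c : ℕ))).card := by
  congr 1
  apply Finset.filter_congr
  intro c _
  by_cases hc : (c : ℕ) < (a : ℕ)
  · rw [hagree c hc]
  · simp [hc]

/-- Ehresmann criterion, hard direction: dominance of the rank counts implies
Bruhat comparability. -/
lemma dom_bruhatLE {v : Equiv.Perm (Fin n)} :
    ∀ z : Equiv.Perm (Fin n), (∀ p q, fcnt z p q ≤ fcnt v p q) → bruhatLE n z v := by
  have key : ∀ (N : ℕ) (z : Equiv.Perm (Fin n)), (∀ p q, fcnt z p q ≤ fcnt v p q) →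
      (∑ pq ∈ Finset.range n ×ˢ Finset.range (n + 1), (fcnt v pq.1 pq.2 - fcnt z pq.1 pq.2)) < N
      → bruhatLE n z v := by
    intro N
    induction N with
    | zero => intro z _ h; omega
    | succ N IH =>
      intro z hdom hPhi
      by_cases hzv : z = v
      · subst hzv; exact Relation.ReflTransGen.refl
      · -- the set of disagreement positions
        have hSd : (Finset.univ.filter fun c : Fin n => z c ≠ v c).Nonempty := by
          by_contra hne
          apply hzv
          apply Equiv.ext
          intro c
          by_contra hc
          exact hne ⟨c, Finset.mem_filter.2 ⟨Finset.mem_univ c, hc⟩⟩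
        set a := (Finset.univ.filter fun c : Fin n => z c ≠ v c).min' hSd with hadef
        have hzavane : z a ≠ v a :=
          (Finset.mem_filter.1 ((Finset.univ.filter fun c : Fin n => z c ≠ v c).min'_mem hSd)).2
        have hagree : ∀ c : Fin n, (c : ℕ) < (a : ℕ) → z c = v c := by
          intro c hc
          by_contra hcc
          have := Finset.min'_le (Finset.univ.filter fun c : Fin n => z c ≠ v c) c
            (Finset.mem_filter.2 ⟨Finset.mem_univ c, hcc⟩)
          rw [← hadef] at this
          have : (a : ℕ) ≤ (c : ℕ) := this
          omega
        -- the M-filter at p = a is empty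
        have hMempty : ∀ (w : Equiv.Perm (Fin n)) (q : ℕ),
            (Finset.univ.filter fun c : Fin n =>
              (a : ℕ) < (c : ℕ) ∧ (c : ℕ) ≤ (a : ℕ) ∧ q ≤ ((w c : ℕ))).card = 0 := by
          intro w q
          rw [Finset.card_eq_zero, Finset.filter_eq_empty_iff]
          intro c _
          omega
        have hzava : (z a : ℕ) < (v a : ℕ) := by
          by_contra hge
          have hlt : (v a : ℕ) < (z a : ℕ) := by
            rcases Nat.lt_or_ge ((v a : ℕ)) ((z a : ℕ)) with h1 | h1
            · exact h1
            · exfalso; exact hzavane (Fin.ext (by omega)).symm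
          have hd := hdom (a : ℕ) ((z a : ℕ))
          rw [fcnt_split z a _ _ (le_refl _), fcnt_split v a _ _ (le_refl _),
            fcnt_lowpart_congr hagree, hMempty z, hMempty v] at hd
          have : ¬ ((z a : ℕ) ≤ (v a : ℕ)) := by omega
          simp only [if_pos (le_refl ((z a : ℕ))), this, if_false] at hd
          omega
        -- choose b
        have hSb : (Finset.univ.filter fun c : Fin n =>
            (a : ℕ) < (c : ℕ) ∧ (z a : ℕ) < ((z c : ℕ)) ∧ ((z c : ℕ)) ≤ ((v a : ℕ))).Nonempty := by
          refine ⟨z.symm (v a), Finset.mem_filter.2 ⟨Finset.mem_univ _, ?_, ?_, ?_⟩⟩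
          · -- a < z.symm (v a)
            have h1 : z (z.symm (v a)) = v a := z.apply_symm_apply _
            have h2 : z.symm (v a) ≠ a := by
              intro hh; rw [hh] at h1; exact hzavane h1
            rcases Nat.lt_or_ge ((a : ℕ)) ((z.symm (v a) : ℕ)) with hgood | hbad
            · exact hgood
            · exfalso
              have hlt : ((z.symm (v a) : ℕ)) < (a : ℕ) := by
                rcases Nat.lt_or_ge ((z.symm (v a) : ℕ)) ((a : ℕ)) with h3 | h3
                · exact h3
                · exact absurd (Fin.ext (by omega)) h2
              have := hagree _ hlt
              rw [h1] at this
              exact h2 (v.injective this.symm)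
          · rw [z.apply_symm_apply]; exact hzava
          · rw [z.apply_symm_apply]
        set b := (Finset.univ.filter fun c : Fin n =>
            (a : ℕ) < (c : ℕ) ∧ (z a : ℕ) < ((z c : ℕ)) ∧ ((z c : ℕ)) ≤ ((v a : ℕ))).min' hSb
          with hbdef
        have hbmem := Finset.mem_filter.1 ((Finset.univ.filter fun c : Fin n =>
            (a : ℕ) < (c : ℕ) ∧ (z a : ℕ) < ((z c : ℕ)) ∧ ((z c : ℕ)) ≤ ((v a : ℕ))).min'_mem hSb)
        have hab : (a : ℕ) < (b : ℕ) := hbmem.2.1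
        have hzazb : (z a : ℕ) < ((z b : ℕ)) := hbmem.2.2.1
        have hzbva : ((z b : ℕ)) ≤ ((v a : ℕ)) := hbmem.2.2.2
        have hbminProp : ∀ c : Fin n, (a : ℕ) < (c : ℕ) → (c : ℕ) < (b : ℕ) →
            ¬ ((z a : ℕ) < ((z c : ℕ)) ∧ ((z c : ℕ)) ≤ ((v a : ℕ))) := by
          intro c hac hcb hcc
          have := Finset.min'_le (Finset.univ.filter fun c : Fin n =>
              (a : ℕ) < (c : ℕ) ∧ (z a : ℕ) < ((z c : ℕ)) ∧ ((z c : ℕ)) ≤ ((v a : ℕ))) c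
            (Finset.mem_filter.2 ⟨Finset.mem_univ c, hac, hcc.1, hcc.2⟩)
          rw [← hbdef] at this
          have : (b : ℕ) ≤ (c : ℕ) := this
          omega
        have hne : a ≠ b := fun hh => by rw [hh] at hab; omega
        set z' := z * Equiv.swap a b with hz'def
        -- the step increases invCount
        have hstep : invCount n z < invCount n z' := by
          have h1 : z' * Equiv.swap a b = z := by
            rw [hz'def, mul_assoc, Equiv.swap_mul_self, mul_one]
          have h2 : (z' b : ℕ) < (z' a : ℕ) := by
            have e1 : z' a = z b := by simp [hz'def, Equiv.Perm.mul_apply]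
            have e2 : z' b = z a := by simp [hz'def, Equiv.Perm.mul_apply]
            rw [e1, e2]; exact hzazb
          have := invCount_swap_lt (z := z') hab h2
          rw [h1] at this
          exact this
        -- dominance is preserved
        have hdom' : ∀ p q, fcnt z' p q ≤ fcnt v p q := by
          intro p q
          rw [hz'def, fcnt_mul_swap hab hzazb p q]
          by_cases hind : (a : ℕ) ≤ p ∧ p < (b : ℕ) ∧ (z a : ℕ) < q ∧ q ≤ ((z b : ℕ))
          · rw [if_pos hind]
            obtain ⟨hap, hpb, hzaq, hqzb⟩ := hind
            rw [fcnt_split z a p q hap]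
            have hfv := fcnt_split v a p q hap
            rw [fcnt_lowpart_congr hagree q]
            have hindz : (if q ≤ ((z a : ℕ)) then 1 else 0) = 0 := by
              rw [if_neg]; omega
            have hindv : (if q ≤ ((v a : ℕ)) then 1 else 0) = 1 := by
              rw [if_pos]; omega
            rw [hindz]
            rw [hindv] at hfv
            -- bound the M parts
            have hMz : (Finset.univ.filter fun c : Fin n =>
                (a : ℕ) < (c : ℕ) ∧ (c : ℕ) ≤ p ∧ q ≤ ((z c : ℕ))).card
                ≤ (Finset.univ.filter fun c : Fin n =>
                (a : ℕ) < (c : ℕ) ∧ (c : ℕ) ≤ p ∧ (v a : ℕ) + 1 ≤ ((z c : ℕ))).card := by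
              apply Finset.card_le_card
              intro c hc
              rcases Finset.mem_filter.1 hc with ⟨_, h1, h2, h3⟩
              refine Finset.mem_filter.2 ⟨Finset.mem_univ c, h1, h2, ?_⟩
              have hcb : (c : ℕ) < (b : ℕ) := by omega
              have := hbminProp c h1 hcb
              omega
            have hM2 : (Finset.univ.filter fun c : Fin n =>
                (a : ℕ) < (c : ℕ) ∧ (c : ℕ) ≤ p ∧ (v a : ℕ) + 1 ≤ ((z c : ℕ))).card
                ≤ (Finset.univ.filter fun c : Fin n =>
                (a : ℕ) < (c : ℕ) ∧ (c : ℕ) ≤ p ∧ (v a : ℕ) + 1 ≤ ((v c : ℕ))).card := by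
              have hd := hdom p ((v a : ℕ) + 1)
              rw [fcnt_split z a p _ hap, fcnt_split v a p _ hap,
                fcnt_lowpart_congr hagree ((v a : ℕ) + 1)] at hd
              have h1 : (if (v a : ℕ) + 1 ≤ ((z a : ℕ)) then 1 else 0) = 0 := by
                rw [if_neg]; omega
              have h2 : (if (v a : ℕ) + 1 ≤ ((v a : ℕ)) then 1 else 0) = 0 := by
                rw [if_neg]; omega
              rw [h1, h2] at hd
              omega
            have hM3 : (Finset.univ.filter fun c : Fin n =>
                (a : ℕ) < (c : ℕ) ∧ (c : ℕ) ≤ p ∧ (v a : ℕ) + 1 ≤ ((v c : ℕ))).card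
                ≤ (Finset.univ.filter fun c : Fin n =>
                (a : ℕ) < (c : ℕ) ∧ (c : ℕ) ≤ p ∧ q ≤ ((v c : ℕ))).card := by
              apply Finset.card_le_card
              intro c hc
              rcases Finset.mem_filter.1 hc with ⟨_, h1, h2, h3⟩
              exact Finset.mem_filter.2 ⟨Finset.mem_univ c, h1, h2, by omega⟩
            omega
          · rw [if_neg hind, add_zero]
            exact hdom p q
        -- strict decrease of the potential
        have hwit : fcnt z' ((a : ℕ)) ((z a : ℕ) + 1) = fcnt z ((a : ℕ)) ((z a : ℕ) + 1) + 1 := by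
          rw [hz'def, fcnt_mul_swap hab hzazb]
          rw [if_pos ⟨le_refl _, hab, by omega, by omega⟩]
        have hgrow : ∀ p q, fcnt z p q ≤ fcnt z' p q := by
          intro p q
          rw [hz'def, fcnt_mul_swap hab hzazb]
          split_ifs <;> omega
        have hPhi' : (∑ pq ∈ Finset.range n ×ˢ Finset.range (n + 1),
            (fcnt v pq.1 pq.2 - fcnt z' pq.1 pq.2)) < N := by
          have hlt : (∑ pq ∈ Finset.range n ×ˢ Finset.range (n + 1),
              (fcnt v pq.1 pq.2 - fcnt z' pq.1 pq.2))
              < (∑ pq ∈ Finset.range n ×ˢ Finset.range (n + 1),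
              (fcnt v pq.1 pq.2 - fcnt z pq.1 pq.2)) := by
            apply Finset.sum_lt_sum
            · intro pq _
              have h1 := hgrow pq.1 pq.2
              omega
            · refine ⟨((a : ℕ), (z a : ℕ) + 1), ?_, ?_⟩
              · rw [Finset.mem_product]
                constructor
                · exact Finset.mem_range.2 a.isLt
                · exact Finset.mem_range.2 (by have := (z a).isLt; omega)
              · show fcnt v ((a : ℕ)) ((z a : ℕ) + 1) - fcnt z' ((a : ℕ)) ((z a : ℕ) + 1)
                    < fcnt v ((a : ℕ)) ((z a : ℕ) + 1) - fcnt z ((a : ℕ)) ((z a : ℕ) + 1)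
                have h1 := hwit
                have h2 := hdom' ((a : ℕ)) ((z a : ℕ) + 1)
                omega
          omega
        exact Relation.ReflTransGen.head ⟨⟨a, b, hne, hz'def⟩, hstep⟩ (IH z' hdom' hPhi')
  intro z hdom
  exact key ((∑ pq ∈ Finset.range n ×ˢ Finset.range (n + 1),
    (fcnt v pq.1 pq.2 - fcnt z pq.1 pq.2)) + 1) z hdom (by omega)

end DesingSMT

namespace DesingSMT

open Finset Equiv

variable {n : ℕ}

lemma card_val_window {m : ℕ} (a b : ℕ) (hb : b ≤ m) :
    (Finset.univ.filter fun c : Fin m => a ≤ (c : ℕ) ∧ (c : ℕ) < b).card = b - a := by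
  rcases le_or_gt a b with hab | hab
  · have himg : (Finset.univ.filter fun c : Fin m => a ≤ (c : ℕ) ∧ (c : ℕ) < b).image Fin.val
        = Finset.Ico a b := by
      ext t
      simp only [Finset.mem_image, Finset.mem_filter, Finset.mem_univ, true_and,
        Finset.mem_Ico]
      constructor
      · rintro ⟨c, ⟨h1, h2⟩, rfl⟩; exact ⟨h1, h2⟩
      · rintro ⟨h1, h2⟩; exact ⟨⟨t, by omega⟩, ⟨h1, h2⟩, rfl⟩
    rw [← Nat.card_Ico a b, ← himg,
      Finset.card_image_of_injective _ Fin.val_injective]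
  · rw [Nat.sub_eq_zero_of_le (le_of_lt hab), Finset.card_eq_zero,
      Finset.filter_eq_empty_iff]
    intro c _
    omega

lemma card_prefix (p : ℕ) :
    (Finset.univ.filter fun c : Fin n => (c : ℕ) ≤ p).card = min (p + 1) n := by
  have h : (Finset.univ.filter fun c : Fin n => (c : ℕ) ≤ p)
      = (Finset.univ.filter fun c : Fin n => 0 ≤ (c : ℕ) ∧ (c : ℕ) < min (p + 1) n) := by
    apply Finset.filter_congr
    intro c _
    have := c.isLt
    constructor
    · intro h1; exact ⟨Nat.zero_le _, by omega⟩
    · intro h1; omega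
  rw [h, card_val_window _ _ (min_le_right _ _)]
  omega

/-- counting from below: if `z` maps `Pos` into `X`, at least `|Pos| - #{x ∈ X, x < q}`
positions of `Pos` carry a value `≥ q`. -/
lemma count_ge_lb (z : Equiv.Perm (Fin n)) (Pos X : Finset (Fin n)) (q : ℕ)
    (hmem : ∀ c ∈ Pos, z c ∈ X) :
    Pos.card - (X.filter fun x : Fin n => (x : ℕ) < q).card
      ≤ (Pos.filter fun c => q ≤ ((z c : ℕ))).card := by
  have hsplit := Finset.card_filter_add_card_filter_not
    (s := Pos) (p := fun c => q ≤ ((z c : ℕ)))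
  have hneg : (Pos.filter fun c => ¬ q ≤ ((z c : ℕ))).card
      ≤ (X.filter fun x : Fin n => (x : ℕ) < q).card := by
    apply Finset.card_le_card_of_injOn (f := fun c => z c)
    · intro c hc
      rcases Finset.mem_filter.1 hc with ⟨hc1, hc2⟩
      exact Finset.mem_filter.2 ⟨hmem c hc1, by simp only; omega⟩
    · intro c _ c' _ hcc
      exact z.injective hcc
  omega

/-- if `z` maps `Pos` into `X` and the cards agree, filtered counts agree exactly. -/
lemma card_filter_image (z : Equiv.Perm (Fin n)) (Pos X : Finset (Fin n))
    (hcard : Pos.card = X.card) (hmem : ∀ c ∈ Pos, z c ∈ X)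
    (P : Fin n → Prop) [DecidablePred P] :
    (Pos.filter fun c => P (z c)).card = (X.filter P).card := by
  have himg : Pos.image (fun c => z c) = X := by
    apply Finset.eq_of_subset_of_card_le
    · intro t ht
      rcases Finset.mem_image.1 ht with ⟨c, hc, rfl⟩
      exact hmem c hc
    · rw [Finset.card_image_of_injective _ z.injective]
      omega
  calc (Pos.filter fun c => P (z c)).card
      = (((Pos.filter fun c => P (z c))).image (fun c => z c)).card := by
        rw [Finset.card_image_of_injective _ z.injective]
    _ = ((Pos.image (fun c => z c)).filter P).card := by
        rw [← Finset.filter_image]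
    _ = (X.filter P).card := by rw [himg]

/-- pigeonhole: under the hypotheses of `card_filter_image`, positions outside `Pos`
have values outside `X`. -/
lemma value_outside (z : Equiv.Perm (Fin n)) (Pos X : Finset (Fin n))
    (hcard : Pos.card = X.card) (hmem : ∀ c ∈ Pos, z c ∈ X) :
    ∀ c, c ∉ Pos → z c ∉ X := by
  have himg : Pos.image (fun c => z c) = X := by
    apply Finset.eq_of_subset_of_card_le
    · intro t ht
      rcases Finset.mem_image.1 ht with ⟨c, hc, rfl⟩
      exact hmem c hc
    · rw [Finset.card_image_of_injective _ z.injective]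
      omega
  intro c hc hcX
  rw [← himg] at hcX
  rcases Finset.mem_image.1 hcX with ⟨c', hc', hcc⟩
  exact hc (by rwa [← z.injective hcc])

lemma fcnt_drop (w : Equiv.Perm (Fin n)) (p P q : ℕ) (hpP : p ≤ P) :
    fcnt w P q ≤ fcnt w p q + (P - p) := by
  unfold fcnt
  have hsub : (Finset.univ.filter fun c : Fin n => (c : ℕ) ≤ P ∧ q ≤ ((w c : ℕ)))
      ⊆ (Finset.univ.filter fun c : Fin n => (c : ℕ) ≤ p ∧ q ≤ ((w c : ℕ)))
        ∪ (Finset.univ.filter fun c : Fin n => p < (c : ℕ) ∧ (c : ℕ) ≤ P) := by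
    intro c hc
    rcases Finset.mem_filter.1 hc with ⟨_, h1, h2⟩
    rcases le_or_gt ((c : ℕ)) p with h3 | h3
    · exact Finset.mem_union_left _ (Finset.mem_filter.2 ⟨Finset.mem_univ _, h3, h2⟩)
    · exact Finset.mem_union_right _ (Finset.mem_filter.2 ⟨Finset.mem_univ _, h3, h1⟩)
  have hwin : (Finset.univ.filter fun c : Fin n => p < (c : ℕ) ∧ (c : ℕ) ≤ P).card ≤ P - p := by
    have h : (Finset.univ.filter fun c : Fin n => p < (c : ℕ) ∧ (c : ℕ) ≤ P)
        = (Finset.univ.filter fun c : Fin n => p + 1 ≤ (c : ℕ) ∧ (c : ℕ) < min (P + 1) n) := by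
      apply Finset.filter_congr
      intro c _
      have := c.isLt
      constructor
      · intro h1; omega
      · intro h1; omega
    rw [h, card_val_window _ _ (min_le_right _ _)]
    omega
  have h1 := Finset.card_le_card hsub
  have h2 := Finset.card_union_le
    (Finset.univ.filter fun c : Fin n => (c : ℕ) ≤ p ∧ q ≤ ((w c : ℕ)))
    (Finset.univ.filter fun c : Fin n => p < (c : ℕ) ∧ (c : ℕ) ≤ P)
  omega

end DesingSMT

namespace DesingSMT

open Finset Equiv

variable {n : ℕ}

/-- the subgroup of permutations stabilising the initial block `[0,k)`. -/
def stabLt (n k : ℕ) : Subgroup (Equiv.Perm (Fin n)) where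
  carrier := {σ | ∀ x : Fin n, ((σ x : ℕ)) < k ↔ (x : ℕ) < k}
  one_mem' := by intro x; simp
  mul_mem' := by
    intro σ τ hσ hτ x
    rw [Equiv.Perm.mul_apply, hσ (τ x), hτ x]
  inv_mem' := by
    intro σ hσ x
    have := hσ (σ⁻¹ x)
    rw [← Equiv.Perm.mul_apply, mul_inv_cancel, Equiv.Perm.one_apply] at this
    exact this.symm

lemma mem_stabLt_iff {k : ℕ} {σ : Equiv.Perm (Fin n)} :
    σ ∈ stabLt n k ↔ ∀ x : Fin n, ((σ x : ℕ)) < k ↔ (x : ℕ) < k := Iff.rfl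

lemma sTrans_mem_stabLt {j k : ℕ} (hj1 : 1 ≤ j) (hjn : j < n) (hjk : j ≠ k) :
    sTrans n j ∈ stabLt n k := by
  rw [mem_stabLt_iff]
  intro x
  unfold sTrans
  rw [dif_pos ⟨hj1, hjn⟩]
  by_cases h1 : x = (⟨j - 1, by omega⟩ : Fin n)
  · rw [h1, Equiv.swap_apply_left]
    have hx : (x : ℕ) = j - 1 := by rw [h1]
    simp only [hx]
    constructor <;> intro <;> omega
  · by_cases h2 : x = (⟨j, hjn⟩ : Fin n)
    · rw [h2, Equiv.swap_apply_right]
      have hx : (x : ℕ) = j := by rw [h2]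
      simp only [hx]
      constructor <;> intro <;> omega
    · rw [Equiv.swap_apply_of_ne_of_ne h1 h2]

lemma parabS_le_stabLt (k : ℕ) : parabS n k ≤ stabLt n k := by
  apply (Subgroup.closure_le _).2
  rintro x ⟨j, hj1, hjn, hjk, rfl⟩
  exact sTrans_mem_stabLt hj1 hjn hjk

lemma eq_one_of_no_descent {k : ℕ} (hk : k ≤ n) (σ : Equiv.Perm (Fin n))
    (hst : ∀ x : Fin n, ((σ x : ℕ)) < k ↔ (x : ℕ) < k)
    (hnd : ∀ a b : Fin n, (b : ℕ) = (a : ℕ) + 1 → (b : ℕ) ≠ k → (σ a : ℕ) < (σ b : ℕ)) :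
    σ = 1 := by
  have up_low : ∀ t : ℕ, ∀ x : Fin n, (x : ℕ) = t → (x : ℕ) < k → t ≤ ((σ x : ℕ)) := by
    intro t
    induction t with
    | zero => intro x _ _; omega
    | succ t IH =>
      intro x hx hxk
      have hxn := x.isLt
      have h1 : t ≤ ((σ (⟨t, by omega⟩ : Fin n) : ℕ)) := IH ⟨t, by omega⟩ rfl (by
        simp only []; omega)
      have h2 : ((σ (⟨t, by omega⟩ : Fin n) : ℕ)) < ((σ x : ℕ)) :=
        hnd ⟨t, by omega⟩ x (by simp only []; omega) (by omega)
      omega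
  have up_high : ∀ t : ℕ, ∀ x : Fin n, (x : ℕ) = k + t → k + t ≤ ((σ x : ℕ)) := by
    intro t
    induction t with
    | zero =>
      intro x hx
      have : ¬ ((σ x : ℕ) < k) := by rw [hst x]; omega
      omega
    | succ t IH =>
      intro x hx
      have hxn := x.isLt
      have h1 : k + t ≤ ((σ (⟨k + t, by omega⟩ : Fin n) : ℕ)) := IH ⟨k + t, by omega⟩ rfl
      have h2 : ((σ (⟨k + t, by omega⟩ : Fin n) : ℕ)) < ((σ x : ℕ)) :=
        hnd ⟨k + t, by omega⟩ x (by simp only []; omega) (by omega)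
      omega
  have down_low : ∀ t : ℕ, ∀ x : Fin n, (x : ℕ) + t = k - 1 → (x : ℕ) < k →
      ((σ x : ℕ)) ≤ (x : ℕ) := by
    intro t
    induction t with
    | zero =>
      intro x hx hxk
      have : ((σ x : ℕ)) < k := by rw [hst x]; omega
      omega
    | succ t IH =>
      intro x hx hxk
      have h1 : ((σ (⟨(x : ℕ) + 1, by omega⟩ : Fin n) : ℕ)) ≤ (x : ℕ) + 1 :=
        IH ⟨(x : ℕ) + 1, by omega⟩ (by simp only []; omega) (by simp only []; omega)
      have h2 : ((σ x : ℕ)) < ((σ (⟨(x : ℕ) + 1, by omega⟩ : Fin n) : ℕ)) :=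
        hnd x ⟨(x : ℕ) + 1, by omega⟩ (by simp only []) (by simp only []; omega)
      omega
  have down_high : ∀ t : ℕ, ∀ x : Fin n, (x : ℕ) + t = n - 1 → k ≤ (x : ℕ) →
      ((σ x : ℕ)) ≤ (x : ℕ) := by
    intro t
    induction t with
    | zero =>
      intro x hx _
      have := (σ x).isLt
      omega
    | succ t IH =>
      intro x hx hxk
      have hxn := x.isLt
      have h1 : ((σ (⟨(x : ℕ) + 1, by omega⟩ : Fin n) : ℕ)) ≤ (x : ℕ) + 1 :=
        IH ⟨(x : ℕ) + 1, by omega⟩ (by simp only []; omega) (by simp only []; omega)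
      have h2 : ((σ x : ℕ)) < ((σ (⟨(x : ℕ) + 1, by omega⟩ : Fin n) : ℕ)) :=
        hnd x ⟨(x : ℕ) + 1, by omega⟩ (by simp only []) (by simp only []; omega)
      omega
  apply Equiv.ext
  intro x
  have hid : ((σ x : ℕ)) = (x : ℕ) := by
    rcases Nat.lt_or_ge ((x : ℕ)) k with hxk | hxk
    · have h1 := up_low ((x : ℕ)) x rfl hxk
      have h2 := down_low (k - 1 - (x : ℕ)) x (by omega) hxk
      omega
    · have h1 := up_high ((x : ℕ) - k) x (by omega)
      have h2 := down_high (n - 1 - (x : ℕ)) x (by omega) hxk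
      omega
  exact Fin.ext hid

lemma stabLt_le_parabS {k : ℕ} (hk1 : 1 ≤ k) (hkn : k < n) :
    stabLt n k ≤ parabS n k := by
  have main : ∀ (N : ℕ) (σ : Equiv.Perm (Fin n)), invCount n σ ≤ N → σ ∈ stabLt n k →
      σ ∈ parabS n k := by
    intro N
    induction N with
    | zero =>
      intro σ hN hσ
      by_cases hone : σ = 1
      · rw [hone]; exact Subgroup.one_mem _
      · exfalso
        have hst := mem_stabLt_iff.1 hσ
        have : ∃ a b : Fin n, (b : ℕ) = (a : ℕ) + 1 ∧ (b : ℕ) ≠ k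
            ∧ ((σ b : ℕ)) < ((σ a : ℕ)) := by
          by_contra hno
          push_neg at hno
          apply hone
          apply eq_one_of_no_descent (le_of_lt hkn) σ hst
          intro a b h1 h2
          have hne : σ a ≠ σ b := fun hh => by
            have := σ.injective hh
            rw [this] at h1
            omega
          have := hno a b h1 h2
          have hne' : ((σ a : ℕ)) ≠ ((σ b : ℕ)) := fun hh => hne (Fin.ext hh)
          omega
        obtain ⟨a, b, hab, hbk, hdesc⟩ := this
        have := invCount_adj_swap hab hdesc
        omega
    | succ N IH =>
      intro σ hN hσ
      by_cases hone : σ = 1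
      · rw [hone]; exact Subgroup.one_mem _
      · have hst := mem_stabLt_iff.1 hσ
        have : ∃ a b : Fin n, (b : ℕ) = (a : ℕ) + 1 ∧ (b : ℕ) ≠ k
            ∧ ((σ b : ℕ)) < ((σ a : ℕ)) := by
          by_contra hno
          push_neg at hno
          apply hone
          apply eq_one_of_no_descent (le_of_lt hkn) σ hst
          intro a b h1 h2
          have hne : σ a ≠ σ b := fun hh => by
            have := σ.injective hh
            rw [this] at h1
            omega
          have := hno a b h1 h2
          have hne' : ((σ a : ℕ)) ≠ ((σ b : ℕ)) := fun hh => hne (Fin.ext hh)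
          omega
        obtain ⟨a, b, hab, hbk, hdesc⟩ := this
        have hcount := invCount_adj_swap hab hdesc
        have hswapstab : Equiv.swap a b ∈ stabLt n k := by
          rw [mem_stabLt_iff]
          intro x
          by_cases h1 : x = a
          · rw [h1, Equiv.swap_apply_left]; omega
          · by_cases h2 : x = b
            · rw [h2, Equiv.swap_apply_right]
              have hbv := b.isLt
              omega
            · rw [Equiv.swap_apply_of_ne_of_ne h1 h2]
        have hσ' : σ * Equiv.swap a b ∈ stabLt n k := Subgroup.mul_mem _ hσ hswapstab
        have hmem' : σ * Equiv.swap a b ∈ parabS n k := IH _ (by omega) hσ'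
        have hgen : Equiv.swap a b ∈ parabS n k := by
          apply Subgroup.subset_closure
          refine ⟨(b : ℕ), by omega, b.isLt, hbk, ?_⟩
          unfold sTrans
          rw [dif_pos ⟨by omega, b.isLt⟩]
          congr 1 <;> apply Fin.ext <;> simp <;> omega
        have : σ = (σ * Equiv.swap a b) * Equiv.swap a b := by
          rw [mul_assoc, Equiv.swap_mul_self, mul_one]
        rw [this]
        exact Subgroup.mul_mem _ hmem' hgen
  intro σ hσ
  exact main (invCount n σ) σ (le_refl _) hσ

end DesingSMT

namespace DesingSMT

open Finset Equiv

variable {n : ℕ}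

/-- the minimal coset representative `u_d` : explicit grassmannian permutation. -/
def u0perm (n d : ℕ) (hd : d ≤ n) : Equiv.Perm (Fin n) where
  toFun c := if h : (c : ℕ) < d then ⟨n - d + (c : ℕ), by omega⟩
             else ⟨(c : ℕ) - d, by have := c.isLt; omega⟩
  invFun c := if h : n - d ≤ (c : ℕ) then ⟨(c : ℕ) - (n - d), by have := c.isLt; omega⟩
              else ⟨(c : ℕ) + d, by have := c.isLt; omega⟩
  left_inv := by
    intro c
    have hc := c.isLt
    dsimp only
    by_cases h : (c : ℕ) < d
    · rw [dif_pos h, dif_pos (by show n - d ≤ n - d + (c : ℕ); omega)]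
      apply Fin.ext
      show n - d + (c : ℕ) - (n - d) = (c : ℕ)
      omega
    · rw [dif_neg h, dif_neg (by show ¬ (n - d ≤ (c : ℕ) - d); omega)]
      apply Fin.ext
      show (c : ℕ) - d + d = (c : ℕ)
      omega
  right_inv := by
    intro c
    have hc := c.isLt
    dsimp only
    by_cases h : n - d ≤ (c : ℕ)
    · rw [dif_pos h, dif_pos (by show (c : ℕ) - (n - d) < d; omega)]
      apply Fin.ext
      show n - d + ((c : ℕ) - (n - d)) = (c : ℕ)
      omega
    · rw [dif_neg h, dif_neg (by show ¬ ((c : ℕ) + d < d); omega)]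
      apply Fin.ext
      show (c : ℕ) + d - d = (c : ℕ)
      omega

lemma u0perm_apply {d : ℕ} (hd : d ≤ n) (c : Fin n) :
    ((u0perm n d hd c : ℕ)) = if (c : ℕ) < d then n - d + (c : ℕ) else (c : ℕ) - d := by
  show ((if h : (c : ℕ) < d then (⟨n - d + (c : ℕ), by omega⟩ : Fin n)
    else ⟨(c : ℕ) - d, by have := c.isLt; omega⟩ : Fin n) : ℕ) = _
  split_ifs with h <;> rfl

lemma u0perm_symm_apply {d : ℕ} (hd : d ≤ n) (c : Fin n) :
    (((u0perm n d hd)⁻¹ c : ℕ))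
      = if n - d ≤ (c : ℕ) then (c : ℕ) - (n - d) else (c : ℕ) + d := by
  show ((if h : n - d ≤ (c : ℕ) then (⟨(c : ℕ) - (n - d), by have := c.isLt; omega⟩ : Fin n)
    else ⟨(c : ℕ) + d, by have := c.isLt; omega⟩ : Fin n) : ℕ) = _
  split_ifs with h <;> rfl

lemma w0_apply (x : Fin n) : ((w0 n x : ℕ)) = n - 1 - (x : ℕ) := by
  show ((Fin.revPerm x : ℕ)) = n - 1 - (x : ℕ)
  rw [Fin.revPerm_apply, Fin.val_rev]
  omega

lemma u0perm_inv_w0_mem_stab {d : ℕ} (hd : d ≤ n) :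
    (u0perm n d hd)⁻¹ * w0 n ∈ stabLt n d := by
  rw [mem_stabLt_iff]
  intro x
  have hx := x.isLt
  rw [Equiv.Perm.mul_apply, u0perm_symm_apply hd, w0_apply]
  split_ifs with h <;> omega

/-- dominance of `u0perm` below any permutation sending `[0,d)` into the top `d` values. -/
lemma dom_u0 {d : ℕ} (hd1 : 1 ≤ d) (hdn : d < n) (z : Equiv.Perm (Fin n))
    (hS : ∀ c : Fin n, (c : ℕ) < d → n - d ≤ ((z c : ℕ))) (p q : ℕ) :
    fcnt (u0perm n d (le_of_lt hdn)) p q ≤ fcnt z p q := by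
  set T : Finset (Fin n) := Finset.univ.filter (fun x : Fin n => n - d ≤ (x : ℕ)) with hT
  have hTcard : T.card = d := by
    rw [hT]
    have : (Finset.univ.filter (fun x : Fin n => n - d ≤ (x : ℕ)))
        = (Finset.univ.filter (fun x : Fin n => n - d ≤ (x : ℕ) ∧ (x : ℕ) < n)) := by
      apply Finset.filter_congr
      intro x _
      have := x.isLt
      constructor
      · intro h1; exact ⟨h1, by omega⟩
      · intro h1; exact h1.1
    rw [this, card_val_window _ _ (le_refl n)]
    omega
  set Pos1 : Finset (Fin n) := Finset.univ.filter (fun c : Fin n => (c : ℕ) < d) with hP1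
  have hP1card : Pos1.card = d := by
    rw [hP1]
    have : (Finset.univ.filter (fun c : Fin n => (c : ℕ) < d))
        = (Finset.univ.filter (fun c : Fin n => 0 ≤ (c : ℕ) ∧ (c : ℕ) < d)) := by
      apply Finset.filter_congr
      intro x _
      simp
    rw [this, card_val_window _ _ (le_of_lt hdn)]
    omega
  have hmem1 : ∀ c ∈ Pos1, z c ∈ T := by
    intro c hc
    rw [hP1] at hc
    rw [hT]
    exact Finset.mem_filter.2 ⟨Finset.mem_univ _, hS c (Finset.mem_filter.1 hc).2⟩
  have hout : ∀ c : Fin n, d ≤ (c : ℕ) → ((z c : ℕ)) < n - d := by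
    intro c hc
    have := value_outside z Pos1 T (by omega) hmem1 c (by
      rw [hP1]
      intro hmem
      have := (Finset.mem_filter.1 hmem).2
      omega)
    rw [hT] at this
    by_contra hcon
    exact this (Finset.mem_filter.2 ⟨Finset.mem_univ _, by omega⟩)
  -- split both counts at the block
  have hsplit : ∀ w : Equiv.Perm (Fin n),
      fcnt w p q = ((Finset.univ.filter fun c : Fin n =>
          ((c : ℕ) ≤ p ∧ q ≤ ((w c : ℕ))) ∧ (c : ℕ) < d).card)
        + ((Finset.univ.filter fun c : Fin n =>
          ((c : ℕ) ≤ p ∧ q ≤ ((w c : ℕ))) ∧ ¬ ((c : ℕ) < d)).card) := by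
    intro w
    have hh := Finset.card_filter_add_card_filter_not
      (s := Finset.univ.filter (fun c : Fin n => (c : ℕ) ≤ p ∧ q ≤ ((w c : ℕ))))
      (p := fun c : Fin n => (c : ℕ) < d)
    rw [Finset.filter_filter, Finset.filter_filter] at hh
    unfold fcnt
    omega
  rw [hsplit (u0perm n d (le_of_lt hdn)), hsplit z]
  -- the u0 parts are exact window counts
  have hU1 : ((Finset.univ.filter fun c : Fin n =>
      ((c : ℕ) ≤ p ∧ q ≤ ((u0perm n d (le_of_lt hdn) c : ℕ))) ∧ (c : ℕ) < d).card)
      = min (p + 1) d - (q - (n - d)) := by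
    have heq : (Finset.univ.filter fun c : Fin n =>
        ((c : ℕ) ≤ p ∧ q ≤ ((u0perm n d (le_of_lt hdn) c : ℕ))) ∧ (c : ℕ) < d)
        = (Finset.univ.filter fun c : Fin n =>
          q - (n - d) ≤ (c : ℕ) ∧ (c : ℕ) < min (p + 1) d) := by
      apply Finset.filter_congr
      intro c _
      rw [u0perm_apply]
      constructor
      · rintro ⟨⟨h1, h2⟩, h3⟩
        rw [if_pos h3] at h2
        exact ⟨by omega, by omega⟩
      · rintro ⟨h1, h2⟩
        have h3 : (c : ℕ) < d := by omega
        rw [if_pos h3]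
        refine ⟨⟨by omega, by omega⟩, h3⟩
    rw [heq, card_val_window _ _ (by omega)]
  have hU2 : ((Finset.univ.filter fun c : Fin n =>
      ((c : ℕ) ≤ p ∧ q ≤ ((u0perm n d (le_of_lt hdn) c : ℕ))) ∧ ¬ ((c : ℕ) < d)).card)
      = min (p + 1) n - (d + q) := by
    have heq : (Finset.univ.filter fun c : Fin n =>
        ((c : ℕ) ≤ p ∧ q ≤ ((u0perm n d (le_of_lt hdn) c : ℕ))) ∧ ¬ ((c : ℕ) < d))
        = (Finset.univ.filter fun c : Fin n =>
          d + q ≤ (c : ℕ) ∧ (c : ℕ) < min (p + 1) n) := by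
      apply Finset.filter_congr
      intro c _
      have hc := c.isLt
      rw [u0perm_apply]
      constructor
      · rintro ⟨⟨h1, h2⟩, h3⟩
        rw [if_neg h3] at h2
        exact ⟨by omega, by omega⟩
      · rintro ⟨h1, h2⟩
        have h3 : ¬ ((c : ℕ) < d) := by omega
        rw [if_neg h3]
        refine ⟨⟨by omega, by omega⟩, h3⟩
    rw [heq, card_val_window _ _ (min_le_right _ _)]
  -- the z parts are bounded below
  have hZ1 : min (p + 1) d - (min q n - (n - d))
      ≤ ((Finset.univ.filter fun c : Fin n =>
        ((c : ℕ) ≤ p ∧ q ≤ ((z c : ℕ))) ∧ (c : ℕ) < d).card) := by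
    have heq : (Finset.univ.filter fun c : Fin n =>
        ((c : ℕ) ≤ p ∧ q ≤ ((z c : ℕ))) ∧ (c : ℕ) < d)
        = ((Finset.univ.filter fun c : Fin n => (c : ℕ) ≤ p ∧ (c : ℕ) < d).filter
          fun c => q ≤ ((z c : ℕ))) := by
      rw [Finset.filter_filter]
      apply Finset.filter_congr
      intro c _
      constructor
      · rintro ⟨⟨h1, h2⟩, h3⟩; exact ⟨⟨h1, h3⟩, h2⟩
      · rintro ⟨⟨h1, h3⟩, h2⟩; exact ⟨⟨h1, h2⟩, h3⟩
    rw [heq]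
    have hposcard : (Finset.univ.filter fun c : Fin n => (c : ℕ) ≤ p ∧ (c : ℕ) < d).card
        = min (p + 1) d := by
      have : (Finset.univ.filter fun c : Fin n => (c : ℕ) ≤ p ∧ (c : ℕ) < d)
          = (Finset.univ.filter fun c : Fin n => 0 ≤ (c : ℕ) ∧ (c : ℕ) < min (p + 1) d) := by
        apply Finset.filter_congr
        intro c _
        constructor
        · rintro ⟨h1, h2⟩; exact ⟨by omega, by omega⟩
        · rintro ⟨h1, h2⟩; exact ⟨by omega, by omega⟩
      rw [this, card_val_window _ _ (by omega)]
      omega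
    have hlX : (T.filter fun x : Fin n => (x : ℕ) < q).card = min q n - (n - d) := by
      have : (T.filter fun x : Fin n => (x : ℕ) < q)
          = (Finset.univ.filter fun x : Fin n => n - d ≤ (x : ℕ) ∧ (x : ℕ) < min q n) := by
        rw [hT, Finset.filter_filter]
        apply Finset.filter_congr
        intro x _
        have := x.isLt
        constructor
        · rintro ⟨h1, h2⟩; exact ⟨h1, by omega⟩
        · rintro ⟨h1, h2⟩; exact ⟨h1, by omega⟩
      rw [this, card_val_window _ _ (min_le_right _ _)]
    have := count_ge_lb z (Finset.univ.filter fun c : Fin n => (c : ℕ) ≤ p ∧ (c : ℕ) < d)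
      T q (by
        intro c hc
        rcases Finset.mem_filter.1 hc with ⟨_, h1, h2⟩
        rw [hT]
        exact Finset.mem_filter.2 ⟨Finset.mem_univ _, hS c h2⟩)
    rw [hposcard, hlX] at this
    exact this
  have hZ2 : (min (p + 1) n - d) - min (min q n) (n - d)
      ≤ ((Finset.univ.filter fun c : Fin n =>
        ((c : ℕ) ≤ p ∧ q ≤ ((z c : ℕ))) ∧ ¬ ((c : ℕ) < d)).card) := by
    have heq : (Finset.univ.filter fun c : Fin n =>
        ((c : ℕ) ≤ p ∧ q ≤ ((z c : ℕ))) ∧ ¬ ((c : ℕ) < d))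
        = ((Finset.univ.filter fun c : Fin n => (c : ℕ) ≤ p ∧ d ≤ (c : ℕ)).filter
          fun c => q ≤ ((z c : ℕ))) := by
      rw [Finset.filter_filter]
      apply Finset.filter_congr
      intro c _
      constructor
      · rintro ⟨⟨h1, h2⟩, h3⟩; exact ⟨⟨h1, by omega⟩, h2⟩
      · rintro ⟨⟨h1, h3⟩, h2⟩; exact ⟨⟨h1, h2⟩, by omega⟩
    rw [heq]
    have hposcard : (Finset.univ.filter fun c : Fin n => (c : ℕ) ≤ p ∧ d ≤ (c : ℕ)).card
        = min (p + 1) n - d := by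
      have : (Finset.univ.filter fun c : Fin n => (c : ℕ) ≤ p ∧ d ≤ (c : ℕ))
          = (Finset.univ.filter fun c : Fin n => d ≤ (c : ℕ) ∧ (c : ℕ) < min (p + 1) n) := by
        apply Finset.filter_congr
        intro c _
        have := c.isLt
        constructor
        · rintro ⟨h1, h2⟩; exact ⟨h2, by omega⟩
        · rintro ⟨h1, h2⟩; exact ⟨by omega, h1⟩
      rw [this, card_val_window _ _ (min_le_right _ _)]
    set Tc : Finset (Fin n) := Finset.univ.filter (fun x : Fin n => (x : ℕ) < n - d) with hTc
    have hlX : (Tc.filter fun x : Fin n => (x : ℕ) < q).card = min (min q n) (n - d) := by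
      have : (Tc.filter fun x : Fin n => (x : ℕ) < q)
          = (Finset.univ.filter fun x : Fin n =>
            0 ≤ (x : ℕ) ∧ (x : ℕ) < min (min q n) (n - d)) := by
        rw [hTc, Finset.filter_filter]
        apply Finset.filter_congr
        intro x _
        have := x.isLt
        constructor
        · rintro ⟨h1, h2⟩; exact ⟨by omega, by omega⟩
        · rintro ⟨h1, h2⟩; exact ⟨by omega, by omega⟩
      rw [this, card_val_window _ _ (by omega)]
      omega
    have := count_ge_lb z (Finset.univ.filter fun c : Fin n => (c : ℕ) ≤ p ∧ d ≤ (c : ℕ))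
      Tc q (by
        intro c hc
        rcases Finset.mem_filter.1 hc with ⟨_, h1, h2⟩
        rw [hTc]
        exact Finset.mem_filter.2 ⟨Finset.mem_univ _, hout c h2⟩)
    rw [hposcard, hlX] at this
    exact this
  rw [hU1, hU2]
  omega

end DesingSMT

namespace DesingSMT

open Finset Equiv

variable {n : ℕ}

/-- forward: anything Bruhat-above `u0perm` maps `[0,d)` into the top `d` values. -/
lemma S_of_bruhat {d : ℕ} (hd1 : 1 ≤ d) (hdn : d < n) (z : Equiv.Perm (Fin n))
    (h : bruhatLE n (u0perm n d (le_of_lt hdn)) z) :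
    ∀ c : Fin n, (c : ℕ) < d → n - d ≤ ((z c : ℕ)) := by
  have hq := bruhatLE_dom h (d - 1) (n - d)
  have hwin : (Finset.univ.filter fun c : Fin n => 0 ≤ (c : ℕ) ∧ (c : ℕ) < d).card = d := by
    rw [card_val_window _ _ (le_of_lt hdn)]
    omega
  have hLHS : fcnt (u0perm n d (le_of_lt hdn)) (d - 1) (n - d) = d := by
    unfold fcnt
    have heq : (Finset.univ.filter fun c : Fin n =>
        (c : ℕ) ≤ d - 1 ∧ n - d ≤ ((u0perm n d (le_of_lt hdn) c : ℕ)))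
        = (Finset.univ.filter fun c : Fin n => 0 ≤ (c : ℕ) ∧ (c : ℕ) < d) := by
      apply Finset.filter_congr
      intro c _
      rw [u0perm_apply]
      constructor
      · rintro ⟨h1, h2⟩
        exact ⟨by omega, by omega⟩
      · rintro ⟨h1, h2⟩
        rw [if_pos h2]
        exact ⟨by omega, by omega⟩
    rw [heq, hwin]
  have hsub : (Finset.univ.filter fun c : Fin n =>
      (c : ℕ) ≤ d - 1 ∧ n - d ≤ ((z c : ℕ)))
      ⊆ (Finset.univ.filter fun c : Fin n => 0 ≤ (c : ℕ) ∧ (c : ℕ) < d) := by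
    intro c hc
    rcases Finset.mem_filter.1 hc with ⟨_, h1, h2⟩
    exact Finset.mem_filter.2 ⟨Finset.mem_univ _, by omega, by omega⟩
  have heq2 : (Finset.univ.filter fun c : Fin n =>
      (c : ℕ) ≤ d - 1 ∧ n - d ≤ ((z c : ℕ)))
      = (Finset.univ.filter fun c : Fin n => 0 ≤ (c : ℕ) ∧ (c : ℕ) < d) := by
    apply Finset.eq_of_subset_of_card_le hsub
    rw [hwin]
    have hL := hLHS
    unfold fcnt at hq hL
    omega
  intro c hc
  have hcmem : c ∈ (Finset.univ.filter fun c : Fin n => 0 ≤ (c : ℕ) ∧ (c : ℕ) < d) :=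
    Finset.mem_filter.2 ⟨Finset.mem_univ _, by omega, hc⟩
  rw [← heq2] at hcmem
  exact (Finset.mem_filter.1 hcmem).2.2

/-- the hypotheses of the theorem pin down `u` as `u0perm`. -/
lemma u_eq_u0 {d : ℕ} (hd1 : 1 ≤ d) (hdn : d < n) (u : Equiv.Perm (Fin n))
    (humem : u⁻¹ * w0 n ∈ parabS n d)
    (humin : ∀ z : Equiv.Perm (Fin n), z⁻¹ * w0 n ∈ parabS n d →
      invCount n u ≤ invCount n z) :
    u = u0perm n d (le_of_lt hdn) := by
  have hstab : u⁻¹ * w0 n ∈ stabLt n d := parabS_le_stabLt d humem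
  have hginv : (u⁻¹ * w0 n)⁻¹ ∈ stabLt n d := Subgroup.inv_mem _ hstab
  have huS : ∀ c : Fin n, (c : ℕ) < d → n - d ≤ ((u c : ℕ)) := by
    intro c hc
    have hu : u c = w0 n ((u⁻¹ * w0 n)⁻¹ c) := by
      simp [Equiv.Perm.mul_apply, Equiv.Perm.inv_def]
    have hlt : (((u⁻¹ * w0 n)⁻¹ c : ℕ)) < d := by
      rw [mem_stabLt_iff] at hginv
      rw [hginv c]
      exact hc
    rw [hu, w0_apply]
    omega
  have hdom : ∀ p q, fcnt (u0perm n d (le_of_lt hdn)) p q ≤ fcnt u p q :=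
    dom_u0 hd1 hdn u huS
  have hble : bruhatLE n (u0perm n d (le_of_lt hdn)) u := dom_bruhatLE (v := u) _ hdom
  have h1 : invCount n (u0perm n d (le_of_lt hdn)) ≤ invCount n u :=
    bruhatLE_invCount_le hble
  have hu0mem : (u0perm n d (le_of_lt hdn))⁻¹ * w0 n ∈ parabS n d :=
    stabLt_le_parabS hd1 hdn (u0perm_inv_w0_mem_stab (le_of_lt hdn))
  have h2 := humin _ hu0mem
  exact (bruhatLE_eq_of_invCount_le hble (by omega)).symm

/-- positions `< i` carry values in the block image of `κ`. -/
lemma coset_block_mem {i : ℕ} (κ y : Equiv.Perm (Fin n))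
    (hy : y⁻¹ * κ ∈ parabS n i) :
    ∀ c : Fin n, (c : ℕ) < i →
      y c ∈ (Finset.univ.filter fun c : Fin n => (c : ℕ) < i).image κ := by
  intro c hc
  have hstab : (y⁻¹ * κ)⁻¹ ∈ stabLt n i := Subgroup.inv_mem _ (parabS_le_stabLt i hy)
  rw [mem_stabLt_iff] at hstab
  have h1 : (((y⁻¹ * κ)⁻¹ c : ℕ)) < i := by rw [hstab c]; exact hc
  have h2 : κ ((y⁻¹ * κ)⁻¹ c) = y c := by
    simp [Equiv.Perm.mul_apply, Equiv.Perm.inv_def]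
  rw [← h2]
  exact Finset.mem_image_of_mem κ (Finset.mem_filter.2 ⟨Finset.mem_univ _, h1⟩)

end DesingSMT

namespace DesingSMT

open Finset Equiv

variable {n : ℕ}

lemma dc_iff {m : ℕ} (S0 : Finset (Fin m))
    (hdc : ∀ r r' : Fin m, (r' : ℕ) ≤ (r : ℕ) → r ∈ S0 → r' ∈ S0) (r : Fin m) :
    r ∈ S0 ↔ (r : ℕ) < S0.card := by
  constructor
  · intro hr
    have hsub : (Finset.univ.filter fun r' : Fin m => 0 ≤ (r' : ℕ) ∧ (r' : ℕ) < (r : ℕ) + 1)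
        ⊆ S0 := by
      intro r' hr'
      rcases Finset.mem_filter.1 hr' with ⟨_, _, h2⟩
      exact hdc r r' (by omega) hr
    have := Finset.card_le_card hsub
    rw [card_val_window _ _ (by have := r.isLt; omega)] at this
    omega
  · intro hr
    by_contra hno
    have hsub : S0 ⊆ Finset.univ.filter (fun r' : Fin m => 0 ≤ (r' : ℕ) ∧ (r' : ℕ) < (r : ℕ)) := by
      intro r'' h''
      refine Finset.mem_filter.2 ⟨Finset.mem_univ _, by omega, ?_⟩
      by_contra hge
      exact hno (hdc r'' r (by omega) h'')
    have := Finset.card_le_card hsub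
    rw [card_val_window _ _ (by have := r.isLt; omega)] at this
    omega

lemma orderIso_lt_iff {m : ℕ} (X : Finset (Fin n)) (hm : X.card = m) (q : ℕ) (r : Fin m) :
    (((X.orderIsoOfFin hm r : Fin n)) : ℕ) < q
      ↔ (r : ℕ) < (X.filter fun x : Fin n => (x : ℕ) < q).card := by
  set e := X.orderIsoOfFin hm with he
  set S0 := Finset.univ.filter (fun r : Fin m => ((e r : Fin n) : ℕ) < q) with hS0
  have hdc : ∀ r r' : Fin m, (r' : ℕ) ≤ (r : ℕ) → r ∈ S0 → r' ∈ S0 := by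
    intro r r' hle hr
    rw [hS0, Finset.mem_filter] at hr ⊢
    refine ⟨Finset.mem_univ _, ?_⟩
    have hrr : r' ≤ r := hle
    have h1 : e r' ≤ e r := e.monotone hrr
    have h2 : ((e r' : Fin n) : ℕ) ≤ ((e r : Fin n) : ℕ) := h1
    omega
  have hcard : S0.card = (X.filter fun x : Fin n => (x : ℕ) < q).card := by
    have himg : S0.image (fun r => (e r : Fin n)) = X.filter fun x : Fin n => (x : ℕ) < q := by
      ext x
      simp only [Finset.mem_image, hS0, Finset.mem_filter, Finset.mem_univ, true_and]
      constructor
      · rintro ⟨r, hr, rfl⟩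
        exact ⟨Finset.coe_mem _, hr⟩
      · rintro ⟨hx, hxq⟩
        refine ⟨e.symm ⟨x, hx⟩, ?_, ?_⟩
        · rw [OrderIso.apply_symm_apply]
          exact hxq
        · rw [OrderIso.apply_symm_apply]
    rw [← himg, Finset.card_image_of_injOn]
    intro r _ r' _ hee
    exact e.injective (Subtype.coe_injective hee)
  have hmem : r ∈ S0 ↔ (((e r : Fin n)) : ℕ) < q := by
    rw [hS0, Finset.mem_filter]
    simp
  rw [← hmem, dc_iff S0 hdc r, hcard]

/-- the underlying function of the block-sorted permutation. -/
noncomputable def bsFun (j k : ℕ) (hjk : j ≤ k) (hk : k ≤ n)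
    (B1 B2 : Finset (Fin n)) (h1 : B1.card = j) (h2 : B2.card = k - j)
    (h3 : ((B1 ∪ B2)ᶜ : Finset (Fin n)).card = n - k) : Fin n → Fin n := fun c =>
  if h : (c : ℕ) < j then ((B1.orderIsoOfFin h1) ⟨(c : ℕ), h⟩ : Fin n)
  else if h' : (c : ℕ) < k then ((B2.orderIsoOfFin h2) ⟨(c : ℕ) - j, by omega⟩ : Fin n)
  else (((B1 ∪ B2)ᶜ.orderIsoOfFin h3) ⟨(c : ℕ) - k, by have := c.isLt; omega⟩ : Fin n)

lemma card_compl_union (j k : ℕ) (hk : k ≤ n) (B1 B2 : Finset (Fin n))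
    (h1 : B1.card = j) (h2 : B2.card = k - j) (hjk : j ≤ k) (hdisj : Disjoint B1 B2) :
    ((B1 ∪ B2)ᶜ : Finset (Fin n)).card = n - k := by
  rw [Finset.card_compl, Finset.card_union_of_disjoint hdisj, Fintype.card_fin]
  omega

set_option maxHeartbeats 1000000 in
lemma bsFun_inj (j k : ℕ) (hjk : j ≤ k) (hk : k ≤ n)
    (B1 B2 : Finset (Fin n)) (h1 : B1.card = j) (h2 : B2.card = k - j)
    (h3 : ((B1 ∪ B2)ᶜ : Finset (Fin n)).card = n - k) (hdisj : Disjoint B1 B2) :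
    Function.Injective (bsFun j k hjk hk B1 B2 h1 h2 h3) := by
  intro c c' heq
  unfold bsFun at heq
  split_ifs at heq with ha hb hc hdd he hf hg
  · have := (B1.orderIsoOfFin h1).injective (Subtype.coe_injective heq)
    have := congrArg Fin.val this
    exact Fin.ext (by simpa using this)
  · exfalso
    have m1 : ((B1.orderIsoOfFin h1) ⟨(c : ℕ), ha⟩ : Fin n) ∈ B1 := Finset.coe_mem _
    have m2 : ((B2.orderIsoOfFin h2) ⟨(c' : ℕ) - j, by omega⟩ : Fin n) ∈ B2 :=
      Finset.coe_mem _
    rw [heq] at m1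
    exact Finset.disjoint_left.1 hdisj m1 m2
  · exfalso
    have m1 : ((B1.orderIsoOfFin h1) ⟨(c : ℕ), ha⟩ : Fin n) ∈ B1 := Finset.coe_mem _
    have m2 : (((B1 ∪ B2)ᶜ.orderIsoOfFin h3) ⟨(c' : ℕ) - k, by have := c'.isLt; omega⟩
        : Fin n) ∈ (B1 ∪ B2)ᶜ := Finset.coe_mem _
    rw [heq] at m1
    rw [Finset.mem_compl] at m2
    exact m2 (Finset.mem_union_left _ m1)
  · exfalso
    have m1 : ((B2.orderIsoOfFin h2) ⟨(c : ℕ) - j, by omega⟩ : Fin n) ∈ B2 :=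
      Finset.coe_mem _
    have m2 : ((B1.orderIsoOfFin h1) ⟨(c' : ℕ), by assumption⟩ : Fin n) ∈ B1 :=
      Finset.coe_mem _
    rw [heq] at m1
    exact Finset.disjoint_left.1 hdisj m2 m1
  · have := (B2.orderIsoOfFin h2).injective (Subtype.coe_injective heq)
    have := congrArg Fin.val this
    simp only [] at this
    exact Fin.ext (by omega)
  · exfalso
    have m1 : ((B2.orderIsoOfFin h2) ⟨(c : ℕ) - j, by omega⟩ : Fin n) ∈ B2 :=
      Finset.coe_mem _
    have m2 : (((B1 ∪ B2)ᶜ.orderIsoOfFin h3) ⟨(c' : ℕ) - k, by have := c'.isLt; omega⟩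
        : Fin n) ∈ (B1 ∪ B2)ᶜ := Finset.coe_mem _
    rw [heq] at m1
    rw [Finset.mem_compl] at m2
    exact m2 (Finset.mem_union_right _ m1)
  · exfalso
    have m1 : (((B1 ∪ B2)ᶜ.orderIsoOfFin h3) ⟨(c : ℕ) - k, by have := c.isLt; omega⟩
        : Fin n) ∈ (B1 ∪ B2)ᶜ := Finset.coe_mem _
    have m2 : ((B1.orderIsoOfFin h1) ⟨(c' : ℕ), by assumption⟩ : Fin n) ∈ B1 :=
      Finset.coe_mem _
    rw [← heq] at m2
    rw [Finset.mem_compl] at m1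
    exact m1 (Finset.mem_union_left _ m2)
  · exfalso
    have m1 : (((B1 ∪ B2)ᶜ.orderIsoOfFin h3) ⟨(c : ℕ) - k, by have := c.isLt; omega⟩
        : Fin n) ∈ (B1 ∪ B2)ᶜ := Finset.coe_mem _
    have m2 : ((B2.orderIsoOfFin h2) ⟨(c' : ℕ) - j, by omega⟩ : Fin n) ∈ B2 :=
      Finset.coe_mem _
    rw [← heq] at m2
    rw [Finset.mem_compl] at m1
    exact m1 (Finset.mem_union_right _ m2)
  · have := ((B1 ∪ B2)ᶜ.orderIsoOfFin h3).injective (Subtype.coe_injective heq)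
    have := congrArg Fin.val this
    simp only [] at this
    have hcn := c.isLt
    have hcn' := c'.isLt
    exact Fin.ext (by omega)

/-- the block-sorted permutation: `B1` sorted on `[0,j)`, `B2` sorted on `[j,k)`,
the complement sorted on `[k,n)`. -/
noncomputable def blockSorted (j k : ℕ) (hjk : j ≤ k) (hk : k ≤ n)
    (B1 B2 : Finset (Fin n)) (h1 : B1.card = j) (h2 : B2.card = k - j)
    (h3 : ((B1 ∪ B2)ᶜ : Finset (Fin n)).card = n - k) (hdisj : Disjoint B1 B2) :
    Equiv.Perm (Fin n) :=
  Equiv.ofBijective (bsFun j k hjk hk B1 B2 h1 h2 h3)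
    (Finite.injective_iff_bijective.1 (bsFun_inj j k hjk hk B1 B2 h1 h2 h3 hdisj))

lemma blockSorted_apply (j k : ℕ) (hjk : j ≤ k) (hk : k ≤ n)
    (B1 B2 : Finset (Fin n)) (h1 : B1.card = j) (h2 : B2.card = k - j)
    (h3 : ((B1 ∪ B2)ᶜ : Finset (Fin n)).card = n - k) (hdisj : Disjoint B1 B2) (c : Fin n) :
    blockSorted j k hjk hk B1 B2 h1 h2 h3 hdisj c = bsFun j k hjk hk B1 B2 h1 h2 h3 c := rfl

end DesingSMT

namespace DesingSMT

open Finset Equiv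

variable {n : ℕ}

lemma blockSorted_mem1 (j k : ℕ) (hjk : j ≤ k) (hk : k ≤ n)
    (B1 B2 : Finset (Fin n)) (h1 : B1.card = j) (h2 : B2.card = k - j)
    (h3 : ((B1 ∪ B2)ᶜ : Finset (Fin n)).card = n - k) (hdisj : Disjoint B1 B2) (c : Fin n)
    (hc : (c : ℕ) < j) : blockSorted j k hjk hk B1 B2 h1 h2 h3 hdisj c ∈ B1 := by
  rw [blockSorted_apply]
  unfold bsFun
  rw [dif_pos hc]
  exact Finset.coe_mem _

lemma blockSorted_mem12 (j k : ℕ) (hjk : j ≤ k) (hk : k ≤ n)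
    (B1 B2 : Finset (Fin n)) (h1 : B1.card = j) (h2 : B2.card = k - j)
    (h3 : ((B1 ∪ B2)ᶜ : Finset (Fin n)).card = n - k) (hdisj : Disjoint B1 B2) (c : Fin n)
    (hc : (c : ℕ) < k) : blockSorted j k hjk hk B1 B2 h1 h2 h3 hdisj c ∈ B1 ∪ B2 := by
  rw [blockSorted_apply]
  unfold bsFun
  by_cases hcj : (c : ℕ) < j
  · rw [dif_pos hcj]
    exact Finset.mem_union_left _ (Finset.coe_mem _)
  · rw [dif_neg hcj, dif_pos hc]
    exact Finset.mem_union_right _ (Finset.coe_mem _)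

set_option maxHeartbeats 1000000 in
lemma fcnt_blockSorted (j k : ℕ) (hjk : j ≤ k) (hk : k ≤ n)
    (B1 B2 : Finset (Fin n)) (h1 : B1.card = j) (h2 : B2.card = k - j)
    (h3 : ((B1 ∪ B2)ᶜ : Finset (Fin n)).card = n - k) (hdisj : Disjoint B1 B2) (p q : ℕ) :
    fcnt (blockSorted j k hjk hk B1 B2 h1 h2 h3 hdisj) p q
      = (min (p + 1) j - (B1.filter fun x : Fin n => (x : ℕ) < q).card)
      + ((min (p + 1) k - (j + (B2.filter fun x : Fin n => (x : ℕ) < q).card))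
      + (min (p + 1) n - (k + (((B1 ∪ B2)ᶜ : Finset (Fin n)).filter
          fun x : Fin n => (x : ℕ) < q).card))) := by
  set z0 := blockSorted j k hjk hk B1 B2 h1 h2 h3 hdisj with hz0
  have hh1 := Finset.card_filter_add_card_filter_not
    (s := Finset.univ.filter (fun c : Fin n => (c : ℕ) ≤ p ∧ q ≤ ((z0 c : ℕ))))
    (p := fun c : Fin n => (c : ℕ) < j)
  rw [Finset.filter_filter, Finset.filter_filter] at hh1
  have hh2 := Finset.card_filter_add_card_filter_not
    (s := Finset.univ.filter (fun c : Fin n =>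
      ((c : ℕ) ≤ p ∧ q ≤ ((z0 c : ℕ))) ∧ ¬ ((c : ℕ) < j)))
    (p := fun c : Fin n => (c : ℕ) < k)
  rw [Finset.filter_filter, Finset.filter_filter] at hh2
  have heq1 : (Finset.univ.filter fun c : Fin n =>
      ((c : ℕ) ≤ p ∧ q ≤ ((z0 c : ℕ))) ∧ (c : ℕ) < j)
      = Finset.univ.filter fun c : Fin n =>
        (B1.filter fun x : Fin n => (x : ℕ) < q).card ≤ (c : ℕ) ∧ (c : ℕ) < min (p + 1) j := by
    apply Finset.filter_congr
    intro c _
    by_cases hcj : (c : ℕ) < j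
    · have hz : ((z0 c : ℕ)) = (((B1.orderIsoOfFin h1) ⟨(c : ℕ), hcj⟩ : Fin n) : ℕ) := by
        rw [hz0, blockSorted_apply]
        unfold bsFun
        rw [dif_pos hcj]
      have hio := orderIso_lt_iff B1 h1 q ⟨(c : ℕ), hcj⟩
      rw [hz]
      constructor
      · rintro ⟨⟨hcp, hq⟩, _⟩
        have : ¬ ((((B1.orderIsoOfFin h1) ⟨(c : ℕ), hcj⟩ : Fin n) : ℕ) < q) := by omega
        rw [hio] at this
        simp only [] at this
        exact ⟨by omega, by omega⟩
      · rintro ⟨hl, hr⟩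
        have : ¬ ((⟨(c : ℕ), hcj⟩ : Fin j) : ℕ) < (B1.filter fun x : Fin n =>
            (x : ℕ) < q).card := by simp only []; omega
        rw [← hio] at this
        exact ⟨⟨by omega, by omega⟩, hcj⟩
    · constructor
      · rintro ⟨_, hcon⟩; omega
      · rintro ⟨_, hcon⟩; omega
  have heq2 : (Finset.univ.filter fun c : Fin n =>
      (((c : ℕ) ≤ p ∧ q ≤ ((z0 c : ℕ))) ∧ ¬ ((c : ℕ) < j)) ∧ (c : ℕ) < k)
      = Finset.univ.filter fun c : Fin n =>
        j + (B2.filter fun x : Fin n => (x : ℕ) < q).card ≤ (c : ℕ)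
          ∧ (c : ℕ) < min (p + 1) k := by
    apply Finset.filter_congr
    intro c _
    by_cases hcj : ¬ ((c : ℕ) < j) ∧ (c : ℕ) < k
    · obtain ⟨hc1, hc2⟩ := hcj
      have hz : ((z0 c : ℕ))
          = (((B2.orderIsoOfFin h2) ⟨(c : ℕ) - j, by omega⟩ : Fin n) : ℕ) := by
        rw [hz0, blockSorted_apply]
        unfold bsFun
        rw [dif_neg hc1, dif_pos hc2]
      have hio := orderIso_lt_iff B2 h2 q ⟨(c : ℕ) - j, by omega⟩
      rw [hz]
      constructor
      · rintro ⟨⟨⟨hcp, hq⟩, _⟩, _⟩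
        have : ¬ ((((B2.orderIsoOfFin h2) ⟨(c : ℕ) - j, by omega⟩ : Fin n) : ℕ) < q) := by
          omega
        rw [hio] at this
        simp only [] at this
        exact ⟨by omega, by omega⟩
      · rintro ⟨hl, hr⟩
        have : ¬ ((⟨(c : ℕ) - j, by omega⟩ : Fin (k - j)) : ℕ) < (B2.filter fun x : Fin n =>
            (x : ℕ) < q).card := by simp only []; omega
        rw [← hio] at this
        exact ⟨⟨⟨by omega, by omega⟩, hc1⟩, hc2⟩
    · constructor
      · rintro ⟨⟨_, hc1⟩, hc2⟩
        exact absurd ⟨hc1, hc2⟩ hcj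
      · rintro ⟨hl, hr⟩
        exfalso
        apply hcj
        constructor <;> omega
  have heq3 : (Finset.univ.filter fun c : Fin n =>
      (((c : ℕ) ≤ p ∧ q ≤ ((z0 c : ℕ))) ∧ ¬ ((c : ℕ) < j)) ∧ ¬ ((c : ℕ) < k))
      = Finset.univ.filter fun c : Fin n =>
        k + (((B1 ∪ B2)ᶜ : Finset (Fin n)).filter fun x : Fin n => (x : ℕ) < q).card ≤ (c : ℕ)
          ∧ (c : ℕ) < min (p + 1) n := by
    apply Finset.filter_congr
    intro c _
    have hcn := c.isLt
    by_cases hck : (c : ℕ) < k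
    · constructor
      · rintro ⟨⟨_, hc1⟩, hc2⟩; omega
      · rintro ⟨hl, hr⟩; omega
    · have hcj : ¬ ((c : ℕ) < j) := by omega
      have hz : ((z0 c : ℕ))
          = ((((B1 ∪ B2)ᶜ.orderIsoOfFin h3) ⟨(c : ℕ) - k, by omega⟩ : Fin n) : ℕ) := by
        rw [hz0, blockSorted_apply]
        unfold bsFun
        rw [dif_neg hcj, dif_neg hck]
      have hio := orderIso_lt_iff ((B1 ∪ B2)ᶜ : Finset (Fin n)) h3 q ⟨(c : ℕ) - k, by omega⟩
      rw [hz]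
      constructor
      · rintro ⟨⟨⟨hcp, hq⟩, _⟩, _⟩
        have : ¬ (((((B1 ∪ B2)ᶜ.orderIsoOfFin h3) ⟨(c : ℕ) - k, by omega⟩ : Fin n) : ℕ) < q)
          := by omega
        rw [hio] at this
        simp only [] at this
        exact ⟨by omega, by omega⟩
      · rintro ⟨hl, hr⟩
        have : ¬ ((⟨(c : ℕ) - k, by omega⟩ : Fin (n - k)) : ℕ)
            < (((B1 ∪ B2)ᶜ : Finset (Fin n)).filter fun x : Fin n => (x : ℕ) < q).card := by
          simp only []; omega
        rw [← hio] at this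
        exact ⟨⟨⟨by omega, by omega⟩, hcj⟩, hck⟩
  rw [heq1] at hh1
  rw [heq2, heq3] at hh2
  rw [card_val_window _ _ (by omega)] at hh1
  rw [card_val_window _ _ (by omega), card_val_window _ _ (by omega)] at hh2
  unfold fcnt
  omega

end DesingSMT

namespace DesingSMT

open Finset Equiv

variable {n : ℕ}

lemma card_block (m : ℕ) (hm : m ≤ n) :
    (Finset.univ.filter fun c : Fin n => (c : ℕ) < m).card = m := by
  have : (Finset.univ.filter fun c : Fin n => (c : ℕ) < m)
      = (Finset.univ.filter fun c : Fin n => 0 ≤ (c : ℕ) ∧ (c : ℕ) < m) := by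
    apply Finset.filter_congr
    intro c _
    simp
  rw [this, card_val_window _ _ hm]
  omega

lemma card_le_n (X : Finset (Fin n)) : X.card ≤ n := by
  have := Finset.card_le_univ X
  rwa [Fintype.card_fin] at this

/-- lower bound for `fcnt` in the initial block. -/
lemma fcnt_ge_block_lb (w : Equiv.Perm (Fin n)) (X : Finset (Fin n)) (m : ℕ) (hm : X.card = m)
    (hblk : ∀ c : Fin n, (c : ℕ) < m → w c ∈ X) (p q : ℕ) (hp : p < m) :
    min (p + 1) m - (X.filter fun x : Fin n => (x : ℕ) < q).card ≤ fcnt w p q := by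
  have hmn : m ≤ n := by have := card_le_n X; omega
  have hfc : fcnt w p q = ((Finset.univ.filter fun c : Fin n => (c : ℕ) ≤ p).filter
      fun c => q ≤ ((w c : ℕ))).card := by
    unfold fcnt
    rw [Finset.filter_filter]
  have hcnt := count_ge_lb w (Finset.univ.filter fun c : Fin n => (c : ℕ) ≤ p) X q (by
    intro c hc
    exact hblk c (by have := (Finset.mem_filter.1 hc).2; omega))
  rw [card_prefix] at hcnt
  rw [hfc]
  omega

/-- lower bound for `fcnt` beyond a full block: exact block count plus complement bound. -/
lemma fcnt_ge_block_exact_plus (w : Equiv.Perm (Fin n)) (X : Finset (Fin n)) (m : ℕ)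
    (hm : X.card = m) (hblk : ∀ c : Fin n, (c : ℕ) < m → w c ∈ X) (p q : ℕ)
    (hp : m - 1 ≤ p) :
    (m - (X.filter fun x : Fin n => (x : ℕ) < q).card)
      + ((min (p + 1) n - m)
        - (((Xᶜ : Finset (Fin n)).filter fun x : Fin n => (x : ℕ) < q).card)
      ) ≤ fcnt w p q := by
  have hmn : m ≤ n := by have := card_le_n X; omega
  set Pos1 : Finset (Fin n) := Finset.univ.filter (fun c : Fin n => (c : ℕ) < m) with hPos1
  have hPos1card : Pos1.card = m := card_block m hmn
  have hmem1 : ∀ c ∈ Pos1, w c ∈ X := by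
    intro c hc
    rw [hPos1] at hc
    exact hblk c (Finset.mem_filter.1 hc).2
  -- split
  have hh := Finset.card_filter_add_card_filter_not
    (s := Finset.univ.filter (fun c : Fin n => (c : ℕ) ≤ p ∧ q ≤ ((w c : ℕ))))
    (p := fun c : Fin n => (c : ℕ) < m)
  rw [Finset.filter_filter, Finset.filter_filter] at hh
  -- part 1 : exact
  have hpart1 : (Finset.univ.filter fun c : Fin n =>
      ((c : ℕ) ≤ p ∧ q ≤ ((w c : ℕ))) ∧ (c : ℕ) < m).card
      = (X.filter fun x : Fin n => q ≤ (x : ℕ)).card := by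
    have heq : (Finset.univ.filter fun c : Fin n =>
        ((c : ℕ) ≤ p ∧ q ≤ ((w c : ℕ))) ∧ (c : ℕ) < m)
        = Pos1.filter (fun c => q ≤ ((w c : ℕ))) := by
      rw [hPos1, Finset.filter_filter]
      apply Finset.filter_congr
      intro c _
      constructor
      · rintro ⟨⟨hc1, hc2⟩, hc3⟩; exact ⟨hc3, hc2⟩
      · rintro ⟨hc3, hc2⟩; exact ⟨⟨by omega, hc2⟩, hc3⟩
    rw [heq]
    exact card_filter_image w Pos1 X (by omega) hmem1 (fun x => q ≤ (x : ℕ))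
  have hXsplit := Finset.card_filter_add_card_filter_not
    (s := X) (p := fun x : Fin n => (x : ℕ) < q)
  have hXcongr : (X.filter fun x : Fin n => ¬ ((x : ℕ) < q))
      = (X.filter fun x : Fin n => q ≤ (x : ℕ)) := by
    apply Finset.filter_congr
    intro x _
    omega
  rw [hXcongr] at hXsplit
  -- part 2 : bound from below
  have hout : ∀ c : Fin n, c ∉ Pos1 → w c ∈ (Xᶜ : Finset (Fin n)) := by
    intro c hc
    rw [Finset.mem_compl]
    exact value_outside w Pos1 X (by omega) hmem1 c hc
  have hpart2 : (min (p + 1) n - m)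
      - (((Xᶜ : Finset (Fin n)).filter fun x : Fin n => (x : ℕ) < q).card)
      ≤ (Finset.univ.filter fun c : Fin n =>
        ((c : ℕ) ≤ p ∧ q ≤ ((w c : ℕ))) ∧ ¬ ((c : ℕ) < m)).card := by
    have heq : (Finset.univ.filter fun c : Fin n =>
        ((c : ℕ) ≤ p ∧ q ≤ ((w c : ℕ))) ∧ ¬ ((c : ℕ) < m))
        = (Finset.univ.filter fun c : Fin n => m ≤ (c : ℕ) ∧ (c : ℕ) ≤ p).filter
          (fun c => q ≤ ((w c : ℕ))) := by
      rw [Finset.filter_filter]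
      apply Finset.filter_congr
      intro c _
      constructor
      · rintro ⟨⟨hc1, hc2⟩, hc3⟩; exact ⟨⟨by omega, hc1⟩, hc2⟩
      · rintro ⟨⟨hc3, hc1⟩, hc2⟩; exact ⟨⟨hc1, hc2⟩, by omega⟩
    have hcard2 : (Finset.univ.filter fun c : Fin n => m ≤ (c : ℕ) ∧ (c : ℕ) ≤ p).card
        = min (p + 1) n - m := by
      have : (Finset.univ.filter fun c : Fin n => m ≤ (c : ℕ) ∧ (c : ℕ) ≤ p)
          = (Finset.univ.filter fun c : Fin n => m ≤ (c : ℕ) ∧ (c : ℕ) < min (p + 1) n) := by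
        apply Finset.filter_congr
        intro c _
        have := c.isLt
        constructor
        · rintro ⟨hc1, hc2⟩; exact ⟨hc1, by omega⟩
        · rintro ⟨hc1, hc2⟩; exact ⟨hc1, by omega⟩
      rw [this, card_val_window _ _ (min_le_right _ _)]
    have hcnt := count_ge_lb w (Finset.univ.filter fun c : Fin n => m ≤ (c : ℕ) ∧ (c : ℕ) ≤ p)
      (Xᶜ : Finset (Fin n)) q (by
        intro c hc
        apply hout
        rw [hPos1]
        intro hmem
        have h4 := (Finset.mem_filter.1 hmem).2
        have h5 := (Finset.mem_filter.1 hc).2.1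
        omega)
    rw [hcard2] at hcnt
    rw [heq]
    exact hcnt
  unfold fcnt
  omega

/-- the master dominance lemma for `blockSorted`. -/
lemma dom_blockSorted (j k : ℕ) (hjk : j ≤ k) (hk : k ≤ n)
    (B1 B2 : Finset (Fin n)) (h1 : B1.card = j) (h2 : B2.card = k - j)
    (h3 : ((B1 ∪ B2)ᶜ : Finset (Fin n)).card = n - k) (hdisj : Disjoint B1 B2)
    (v : Equiv.Perm (Fin n))
    (hα : ∀ p q, p < j →
      min (p + 1) j - (B1.filter fun x : Fin n => (x : ℕ) < q).card ≤ fcnt v p q)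
    (hβ1 : ∀ p q, j - 1 ≤ p →
      j - (B1.filter fun x : Fin n => (x : ℕ) < q).card ≤ fcnt v p q)
    (hβ2 : ∀ p q, p < k →
      min (p + 1) k - ((B1.filter fun x : Fin n => (x : ℕ) < q).card
        + (B2.filter fun x : Fin n => (x : ℕ) < q).card) ≤ fcnt v p q)
    (hγ : ∀ p q, k - 1 ≤ p →
      (k - ((B1.filter fun x : Fin n => (x : ℕ) < q).card
        + (B2.filter fun x : Fin n => (x : ℕ) < q).card))
      + ((min (p + 1) n - k) - (((B1 ∪ B2)ᶜ : Finset (Fin n)).filter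
          fun x : Fin n => (x : ℕ) < q).card) ≤ fcnt v p q) :
    ∀ p q, fcnt (blockSorted j k hjk hk B1 B2 h1 h2 h3 hdisj) p q ≤ fcnt v p q := by
  intro p q
  rw [fcnt_blockSorted]
  have hl1 : (B1.filter fun x : Fin n => (x : ℕ) < q).card ≤ j := by
    have := Finset.card_filter_le B1 (fun x : Fin n => (x : ℕ) < q)
    omega
  have hl2 : (B2.filter fun x : Fin n => (x : ℕ) < q).card ≤ k - j := by
    have := Finset.card_filter_le B2 (fun x : Fin n => (x : ℕ) < q)
    omega
  have hl3 : (((B1 ∪ B2)ᶜ : Finset (Fin n)).filter fun x : Fin n => (x : ℕ) < q).card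
      ≤ n - k := by
    have := Finset.card_filter_le ((B1 ∪ B2)ᶜ : Finset (Fin n))
      (fun x : Fin n => (x : ℕ) < q)
    omega
  rcases Nat.lt_or_ge p j with hpj | hpj
  · have ha := hα p q hpj
    omega
  · rcases Nat.lt_or_ge p k with hpk | hpk
    · have hb1 := hβ1 p q (by omega)
      have hb2 := hβ2 p q hpk
      omega
    · have hg := hγ p q (by omega)
      omega

end DesingSMT

namespace DesingSMT

open Finset Equiv

variable {n : ℕ}

lemma image_block_eq (z : Equiv.Perm (Fin n)) (m : ℕ) (X : Finset (Fin n))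
    (hcard : X.card = m) (hblk : ∀ c : Fin n, (c : ℕ) < m → z c ∈ X) :
    (Finset.univ.filter fun c : Fin n => (c : ℕ) < m).image (fun c => z c) = X := by
  have hmn : m ≤ n := by have := card_le_n X; omega
  apply Finset.eq_of_subset_of_card_le
  · intro t ht
    rcases Finset.mem_image.1 ht with ⟨c, hc, rfl⟩
    exact hblk c (Finset.mem_filter.1 hc).2
  · rw [Finset.card_image_of_injective _ z.injective, card_block m hmn]
    omega

lemma stab_of_blocks (z κ : Equiv.Perm (Fin n)) (m : ℕ) (X : Finset (Fin n))
    (hcard : X.card = m) (hz : ∀ c : Fin n, (c : ℕ) < m → z c ∈ X)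
    (hκ : ∀ c : Fin n, (c : ℕ) < m → κ c ∈ X) :
    z⁻¹ * κ ∈ stabLt n m := by
  have hmn : m ≤ n := by have := card_le_n X; omega
  have hkey : ∀ (w : Equiv.Perm (Fin n)), (∀ c : Fin n, (c : ℕ) < m → w c ∈ X) →
      ∀ x : Fin n, (((w⁻¹ x : Fin n)) : ℕ) < m ↔ x ∈ X := by
    intro w hw x
    constructor
    · intro h
      have : w (w⁻¹ x) ∈ X := hw _ h
      rwa [← Equiv.Perm.mul_apply, mul_inv_cancel, Equiv.Perm.one_apply] at this
    · intro hx
      by_contra hcon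
      have hout := value_outside w (Finset.univ.filter fun c : Fin n => (c : ℕ) < m) X
        (by rw [card_block m hmn]; omega) (fun c hc => hw c (Finset.mem_filter.1 hc).2)
        (w⁻¹ x) (by
          intro hmem
          exact hcon (Finset.mem_filter.1 hmem).2)
      rw [← Equiv.Perm.mul_apply, mul_inv_cancel, Equiv.Perm.one_apply] at hout
      exact hout hx
  rw [mem_stabLt_iff]
  intro c
  have h1 : (((z⁻¹ * κ) c : Fin n) : ℕ) < m ↔ κ c ∈ X := by
    rw [Equiv.Perm.mul_apply]
    exact hkey z hz (κ c)
  rw [h1]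
  constructor
  · intro hc
    by_contra hcon
    have := value_outside κ (Finset.univ.filter fun c : Fin n => (c : ℕ) < m) X
      (by rw [card_block m hmn]; omega) (fun c hc => hκ c (Finset.mem_filter.1 hc).2)
      c (by intro hmem; exact hcon (Finset.mem_filter.1 hmem).2)
    exact this hc
  · intro hc
    exact hκ c hc

end DesingSMT


namespace DesingSMT

/-- Let `W = S_n`, let `P_d` be the maximal parabolic subgroup
associated to the `d`-th simple root, and let `u_d` be the minimal element of `W` with
`u_d ≡ w₀ mod W_{P_d}`.  Let `w ≥ u_d` and `κ ∈ W^{P_i}` for an arbitrary `i`, with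
`E(w,κ) ≠ ∅`.  Assume `max E(w,κ) ≥ u_d`.  Then for every `v ≥ u_d` with
`E(v,κ) ≠ ∅`, one has `max E(v,κ) ≥ u_d`.  (Here `E(w,κ) = {v ≤ w ∣ v ≡ κ mod W_{P_i}}`
and `max` is with respect to the Bruhat order.) -/
theorem statement9 (n d i : ℕ) (hd1 : 1 ≤ d) (hdn : d < n) (hi1 : 1 ≤ i) (hin : i < n)
    (u : Equiv.Perm (Fin n))
    -- `u` is the minimal element congruent to `w₀` modulo `W_{P_d}`:
    (humem : u⁻¹ * w0 n ∈ parabS n d)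
    (humin : ∀ z : Equiv.Perm (Fin n), z⁻¹ * w0 n ∈ parabS n d → invCount n u ≤ invCount n z)
    -- `κ ∈ W^{P_i}`:
    (κ : Equiv.Perm (Fin n)) (hκ : ∀ z ∈ parabS n i, invCount n κ ≤ invCount n (κ * z))
    (w x : Equiv.Perm (Fin n)) (hw : bruhatLE n u w)
    -- `x = max E(w,κ)`:
    (hxE : bruhatLE n x w ∧ x⁻¹ * κ ∈ parabS n i)
    (hxmax : ∀ v : Equiv.Perm (Fin n),
      bruhatLE n v w ∧ v⁻¹ * κ ∈ parabS n i → bruhatLE n v x)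
    (hxu : bruhatLE n u x) :
    ∀ v : Equiv.Perm (Fin n), bruhatLE n u v →
      ∀ y : Equiv.Perm (Fin n),
        (bruhatLE n y v ∧ y⁻¹ * κ ∈ parabS n i) →
        (∀ z : Equiv.Perm (Fin n), bruhatLE n z v ∧ z⁻¹ * κ ∈ parabS n i → bruhatLE n z y) →
        bruhatLE n u y := by
  intro v huv y hyE hymax
  obtain ⟨hyv, hyκ⟩ := hyE
  have hu0 : u = u0perm n d (le_of_lt hdn) := u_eq_u0 hd1 hdn u humem humin
  rw [hu0] at huv hxu ⊢
  set T : Finset (Fin n) := Finset.univ.filter (fun t : Fin n => n - d ≤ (t : ℕ)) with hT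
  have hTcard : T.card = d := by
    rw [hT]
    have heq : (Finset.univ.filter (fun t : Fin n => n - d ≤ (t : ℕ)))
        = (Finset.univ.filter (fun t : Fin n => n - d ≤ (t : ℕ) ∧ (t : ℕ) < n)) := by
      apply Finset.filter_congr
      intro t _
      have := t.isLt
      constructor
      · intro h1; exact ⟨h1, by omega⟩
      · intro h1; exact h1.1
    rw [heq, card_val_window _ _ (le_refl n)]
    omega
  set A : Finset (Fin n) :=
    (Finset.univ.filter fun c : Fin n => (c : ℕ) < i).image κ with hA
  have hAcard : A.card = i := by
    rw [hA, Finset.card_image_of_injective _ κ.injective, card_block i (le_of_lt hin)]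
  have hκA : ∀ c : Fin n, (c : ℕ) < i → κ c ∈ A := by
    intro c hc
    rw [hA]
    exact Finset.mem_image_of_mem κ (Finset.mem_filter.2 ⟨Finset.mem_univ _, hc⟩)
  have hyA : ∀ c : Fin n, (c : ℕ) < i → y c ∈ A := by
    rw [hA]; exact coset_block_mem κ y hyκ
  have hxA : ∀ c : Fin n, (c : ℕ) < i → x c ∈ A := by
    rw [hA]; exact coset_block_mem κ x hxE.2
  have hvS : ∀ c : Fin n, (c : ℕ) < d → n - d ≤ ((v c : ℕ)) := S_of_bruhat hd1 hdn v huv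
  have hxS : ∀ c : Fin n, (c : ℕ) < d → n - d ≤ ((x c : ℕ)) := S_of_bruhat hd1 hdn x hxu
  have hvT : ∀ c : Fin n, (c : ℕ) < d → v c ∈ T := by
    intro c hc
    rw [hT]
    exact Finset.mem_filter.2 ⟨Finset.mem_univ _, hvS c hc⟩
  have hxT : ∀ c : Fin n, (c : ℕ) < d → x c ∈ T := by
    intro c hc
    rw [hT]
    exact Finset.mem_filter.2 ⟨Finset.mem_univ _, hxS c hc⟩
  have hydom : ∀ p q, fcnt y p q ≤ fcnt v p q := fun p q => bruhatLE_dom hyv p q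
  rcases le_or_gt i d with hid | hid
  · -- case i ≤ d : A ⊆ T
    have hAT : A ⊆ T := by
      intro t ht
      have himg := image_block_eq x i A hAcard hxA
      rw [← himg] at ht
      rcases Finset.mem_image.1 ht with ⟨c, hc, rfl⟩
      exact hxT c (by have := (Finset.mem_filter.1 hc).2; omega)
    have hB2card : (T \ A).card = d - i := by
      rw [Finset.card_sdiff_of_subset hAT]
      omega
    have hdisjAB : Disjoint A (T \ A) := Finset.disjoint_sdiff
    have hU : A ∪ (T \ A) = T := Finset.union_sdiff_of_subset hAT
    have h3 : ((A ∪ (T \ A))ᶜ : Finset (Fin n)).card = n - d :=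
      card_compl_union i d (le_of_lt hdn) A (T \ A) hAcard hB2card hid hdisjAB
    set z0 := blockSorted i d hid (le_of_lt hdn) A (T \ A) hAcard hB2card h3 hdisjAB with hz0
    have hpart : ∀ q : ℕ, (T.filter fun t : Fin n => (t : ℕ) < q).card
        = (A.filter fun t : Fin n => (t : ℕ) < q).card
          + ((T \ A).filter fun t : Fin n => (t : ℕ) < q).card := by
      intro q
      nth_rewrite 1 [← hU]
      rw [Finset.filter_union,
        Finset.card_union_of_disjoint (Finset.disjoint_filter_filter hdisjAB)]
    have hdom : ∀ p q, fcnt z0 p q ≤ fcnt v p q := by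
      rw [hz0]
      apply dom_blockSorted
      · intro p q hp
        exact le_trans (fcnt_ge_block_lb y A i hAcard hyA p q hp) (hydom p q)
      · intro p q hp
        have h := fcnt_ge_block_exact_plus y A i hAcard hyA p q hp
        have h2 := hydom p q
        omega
      · intro p q hp
        have h := fcnt_ge_block_lb v T d hTcard hvT p q hp
        have h2 := hpart q
        omega
      · intro p q hp
        have h := fcnt_ge_block_exact_plus v T d hTcard hvT p q hp
        have h2 := hpart q
        have hce : ((A ∪ (T \ A))ᶜ : Finset (Fin n)) = (Tᶜ : Finset (Fin n)) := by rw [hU]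
        rw [hce]
        omega
    have hz0v : bruhatLE n z0 v := dom_bruhatLE _ hdom
    have hz0S : ∀ c : Fin n, (c : ℕ) < d → n - d ≤ ((z0 c : ℕ)) := by
      intro c hc
      have hmem := blockSorted_mem12 i d hid (le_of_lt hdn) A (T \ A) hAcard hB2card h3
        hdisjAB c hc
      have hmem2 : z0 c ∈ T := (Finset.union_subset hAT Finset.sdiff_subset) hmem
      exact (Finset.mem_filter.1 (show z0 c ∈ Finset.univ.filter
        (fun t : Fin n => n - d ≤ (t : ℕ)) from hmem2)).2
    have hz0A : ∀ c : Fin n, (c : ℕ) < i → z0 c ∈ A := by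
      intro c hc
      have := blockSorted_mem1 i d hid (le_of_lt hdn) A (T \ A) hAcard hB2card h3
        hdisjAB c hc
      exact this
    have hz0κ : z0⁻¹ * κ ∈ parabS n i :=
      stabLt_le_parabS hi1 hin (stab_of_blocks z0 κ i A hAcard hz0A hκA)
    have hz0y : bruhatLE n z0 y := hymax z0 ⟨hz0v, hz0κ⟩
    have huz0 : bruhatLE n (u0perm n d (le_of_lt hdn)) z0 :=
      dom_bruhatLE (v := z0) _ (dom_u0 hd1 hdn z0 hz0S)
    exact Relation.ReflTransGen.trans huz0 hz0y
  · -- case d < i : T ⊆ A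
    have hTA : T ⊆ A := by
      intro t ht
      have himg := image_block_eq x d T hTcard hxT
      rw [← himg] at ht
      rcases Finset.mem_image.1 ht with ⟨c, hc, rfl⟩
      exact hxA c (by have := (Finset.mem_filter.1 hc).2; omega)
    have hB2card : (A \ T).card = i - d := by
      rw [Finset.card_sdiff_of_subset hTA]
      omega
    have hdisjAB : Disjoint T (A \ T) := Finset.disjoint_sdiff
    have hU : T ∪ (A \ T) = A := Finset.union_sdiff_of_subset hTA
    have h3 : ((T ∪ (A \ T))ᶜ : Finset (Fin n)).card = n - i :=
      card_compl_union d i (le_of_lt hin) T (A \ T) hTcard hB2card (le_of_lt hid) hdisjAB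
    set z0 := blockSorted d i (le_of_lt hid) (le_of_lt hin) T (A \ T) hTcard hB2card h3
      hdisjAB with hz0
    have hpart : ∀ q : ℕ, (A.filter fun t : Fin n => (t : ℕ) < q).card
        = (T.filter fun t : Fin n => (t : ℕ) < q).card
          + ((A \ T).filter fun t : Fin n => (t : ℕ) < q).card := by
      intro q
      nth_rewrite 1 [← hU]
      rw [Finset.filter_union,
        Finset.card_union_of_disjoint (Finset.disjoint_filter_filter hdisjAB)]
    have hdom : ∀ p q, fcnt z0 p q ≤ fcnt v p q := by
      rw [hz0]
      apply dom_blockSorted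
      · intro p q hp
        exact fcnt_ge_block_lb v T d hTcard hvT p q hp
      · intro p q hp
        have h := fcnt_ge_block_exact_plus v T d hTcard hvT p q hp
        omega
      · intro p q hp
        have h := fcnt_ge_block_lb y A i hAcard hyA p q hp
        have h2 := hydom p q
        have h3' := hpart q
        omega
      · intro p q hp
        have h := fcnt_ge_block_exact_plus y A i hAcard hyA p q hp
        have h2 := hydom p q
        have h3' := hpart q
        have hce : ((T ∪ (A \ T))ᶜ : Finset (Fin n)) = (Aᶜ : Finset (Fin n)) := by rw [hU]
        rw [hce]
        omega
    have hz0v : bruhatLE n z0 v := dom_bruhatLE _ hdom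
    have hz0S : ∀ c : Fin n, (c : ℕ) < d → n - d ≤ ((z0 c : ℕ)) := by
      intro c hc
      have hmem := blockSorted_mem1 d i (le_of_lt hid) (le_of_lt hin) T (A \ T) hTcard
        hB2card h3 hdisjAB c hc
      exact (Finset.mem_filter.1 (show z0 c ∈ Finset.univ.filter
        (fun t : Fin n => n - d ≤ (t : ℕ)) from hmem)).2
    have hz0A : ∀ c : Fin n, (c : ℕ) < i → z0 c ∈ A := by
      intro c hc
      have hmem := blockSorted_mem12 d i (le_of_lt hid) (le_of_lt hin) T (A \ T) hTcard
        hB2card h3 hdisjAB c hc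
      exact (Finset.union_subset hTA Finset.sdiff_subset) hmem
    have hz0κ : z0⁻¹ * κ ∈ parabS n i :=
      stabLt_le_parabS hi1 hin (stab_of_blocks z0 κ i A hAcard hz0A hκA)
    have hz0y : bruhatLE n z0 y := hymax z0 ⟨hz0v, hz0κ⟩
    have huz0 : bruhatLE n (u0perm n d (le_of_lt hdn)) z0 :=
      dom_bruhatLE (v := z0) _ (dom_u0 hd1 hdn z0 hz0S)
    exact Relation.ReflTransGen.trans huz0 hz0y


end DesingSMT
end
end
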